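/- arXiv:2303.18158 — 3 statements merged into one kernel-verified Lean document; each statement's English description precedes it below -/
import Mathlib

section
/- Consider the mixed-binary set W = {(β, γ, δ) ∈ ℝ^q × ℝ^p × Δ : h_i(β_{i,1}) ≤ γ_i for all i ∈ [p], β_{i,1}(1 − δ_i) = 0 for all i ∈ [p], and C_i β_i ∈ ℂ_i for all i ∈ [p]}. If for every i ∈ [p] there exists δ ∈ Δ with δ_i = 1, then the closed convex hull of W equals {(β, γ, δ) ∈ ℝ^q × ℝ^p × conv(Δ) : h_i^π(β_{i,1}, δ_i) ≤ γ_i for all i ∈ [p], and C_i β_i ∈ ℂ_i for all i ∈ [p]}. -/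
open scoped Classical

open Filter Set Topology

/-- The closure `h^π` of the perspective function of `h : ℝ → ℝ ∪ {+∞}`:
`h^π(x, w) = w·h(x/w)` for `w > 0`, `h^π(x, 0) = lim_{s ↓ 0} s·h(x/s)`, and `+∞` for `w < 0`. -/
noncomputable def perspCl (h : ℝ → EReal) (x w : ℝ) : EReal :=
  if 0 < w then (w : EReal) * h (x / w)
  else if w = 0 then
    Filter.limUnder (nhdsWithin (0 : ℝ) (Set.Ioi 0)) (fun s : ℝ => (s : EReal) * h (x / s))
  else ⊤

namespace PerspAux

/-- affine minorants of `h`. -/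
def mino (h : ℝ → EReal) : Set (ℝ × ℝ) :=
  {c | ∀ y : ℝ, ((c.1 * y + c.2 : ℝ) : EReal) ≤ h y}

/-- `aff h c x w` is the linear function associated to a minorant, `⊥` for non-minorants. -/
noncomputable def aff (h : ℝ → EReal) (c : ℝ × ℝ) (x w : ℝ) : EReal :=
  if c ∈ mino h then ((c.1 * x + c.2 * w : ℝ) : EReal) else ⊥

structure Nice (h : ℝ → EReal) : Prop where
  hbot : ∀ x : ℝ, h x ≠ ⊥
  hnetop : ∃ x : ℝ, h x ≠ ⊤
  hlsc : LowerSemicontinuous h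
  hconv : Convex ℝ {u : ℝ × ℝ | h u.2 ≤ (u.1 : EReal)}
  h0 : h 0 = 0

variable {h : ℝ → EReal}

lemma mino_snd_nonpos (h0 : h 0 = 0) {c : ℝ × ℝ} (hc : c ∈ mino h) : c.2 ≤ 0 := by
  have := hc 0
  rw [mul_zero, zero_add, h0] at this
  exact_mod_cast this

lemma epi_closed (hlsc : LowerSemicontinuous h) :
    IsClosed {u : ℝ × ℝ | h u.2 ≤ (u.1 : EReal)} := by
  have hcl : IsClosed {p : ℝ × EReal | h p.1 ≤ p.2} := hlsc.isClosed_epigraph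
  have : Continuous (fun u : ℝ × ℝ => ((u.2, (u.1 : EReal)) : ℝ × EReal)) := by
    exact (continuous_snd.prodMk (continuous_coe_real_ereal.comp continuous_fst))
  exact hcl.preimage this

/-- Separation of a point below the epigraph. -/
lemma sep (hbot : ∀ x : ℝ, h x ≠ ⊥) (hnetop : ∃ x : ℝ, h x ≠ ⊤)
    (hlsc : LowerSemicontinuous h)
    (hconv : Convex ℝ {u : ℝ × ℝ | h u.2 ≤ (u.1 : EReal)})
    {t0 y0 : ℝ} (hty : ¬ h y0 ≤ (t0 : EReal)) :
    ∃ α β u : ℝ, 0 ≤ α ∧ α * t0 + β * y0 < u ∧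
      ∀ y s : ℝ, h y ≤ (s : EReal) → u < α * s + β * y := by
  have hE : (⟨t0, y0⟩ : ℝ × ℝ) ∉ {u : ℝ × ℝ | h u.2 ≤ (u.1 : EReal)} := hty
  obtain ⟨f, u, hfu, hfE⟩ :=
    geometric_hahn_banach_point_closed hconv (epi_closed hlsc) hE
  set α : ℝ := f (1, 0) with hα
  set β : ℝ := f (0, 1) with hβ
  have hf : ∀ t y : ℝ, f (t, y) = α * t + β * y := by
    intro t y
    have : (t, y) = t • ((1 : ℝ), (0 : ℝ)) + y • ((0 : ℝ), (1 : ℝ)) := by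
      simp [Prod.ext_iff]
    rw [this, map_add, map_smul, map_smul, smul_eq_mul, smul_eq_mul]
    ring
  have hfE' : ∀ y s : ℝ, h y ≤ (s : EReal) → u < α * s + β * y := by
    intro y s hy
    have := hfE (s, y) hy
    rwa [hf] at this
  -- E is nonempty
  obtain ⟨y1, hy1⟩ := hnetop
  have hy1r : h y1 = ((h y1).toReal : EReal) := (EReal.coe_toReal hy1 (hbot y1)).symm
  set t1 : ℝ := (h y1).toReal
  have hmem1 : h y1 ≤ (t1 : EReal) := le_of_eq hy1r
  -- α ≥ 0
  have hαnn : 0 ≤ α := by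
    by_contra hneg
    push_neg at hneg
    set m : ℝ := (u - α * t1 - β * y1) / α + 1 with hm
    have hmem : h y1 ≤ ((t1 + max m 0 : ℝ) : EReal) := by
      refine hmem1.trans ?_
      exact_mod_cast by linarith [le_max_right m (0:ℝ)]
    have h2 := hfE' y1 (t1 + max m 0) hmem
    have hD : u - α * t1 - β * y1 < 0 := by
      have := hfE' y1 t1 hmem1; linarith
    have h3 : α * max m 0 ≤ α * m := by
      apply mul_le_mul_of_nonpos_left (le_max_left m 0) hneg.le
    have h4 : α * m = (u - α * t1 - β * y1) + α := by
      rw [hm, mul_add, mul_div_cancel₀ _ (ne_of_lt hneg), mul_one]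
    have h5 : α * (t1 + max m 0) = α * t1 + α * (max m 0) := by ring
    linarith [h2, h3, h4, h5]
  refine ⟨α, β, u, hαnn, ?_, hfE'⟩
  have := hfu
  rwa [hf] at this

lemma minorant_of_sep {α β u t0 y0 : ℝ} (hα : 0 < α)
    (hbot : ∀ x : ℝ, h x ≠ ⊥)
    (hlt : α * t0 + β * y0 < u)
    (hsep : ∀ y s : ℝ, h y ≤ (s : EReal) → u < α * s + β * y) :
    ∃ c ∈ mino h, t0 < c.1 * y0 + c.2 := by
  refine ⟨(-β / α, u / α), ?_, ?_⟩
  · intro y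
    rcases eq_or_ne (h y) ⊤ with hy | hy
    · rw [hy]; exact le_top
    · have hyr : h y = (((h y).toReal : ℝ) : EReal) := (EReal.coe_toReal hy (hbot y)).symm
      set s : ℝ := (h y).toReal
      have := hsep y s (le_of_eq hyr)
      rw [hyr]
      refine EReal.coe_le_coe_iff.2 ?_
      rw [div_mul_eq_mul_div, ← add_div, div_le_iff₀ hα]
      nlinarith
  · simp only
    rw [div_mul_eq_mul_div, ← add_div, lt_div_iff₀ hα]
    nlinarith

lemma mino_nonempty (hbot : ∀ x : ℝ, h x ≠ ⊥) (hnetop : ∃ x : ℝ, h x ≠ ⊤)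
    (hlsc : LowerSemicontinuous h)
    (hconv : Convex ℝ {u : ℝ × ℝ | h u.2 ≤ (u.1 : EReal)}) :
    ∃ c, c ∈ mino h := by
  obtain ⟨y1, hy1⟩ := hnetop
  have hy1r : h y1 = ((h y1).toReal : EReal) := (EReal.coe_toReal hy1 (hbot y1)).symm
  set t1 : ℝ := (h y1).toReal
  have hty : ¬ h y1 ≤ ((t1 - 1 : ℝ) : EReal) := by
    rw [hy1r]
    intro hcon
    have := EReal.coe_le_coe_iff.1 hcon
    linarith
  obtain ⟨α, β, u, hαnn, hlt, hsep⟩ := sep hbot ⟨y1, hy1⟩ hlsc hconv hty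
  have hα : 0 < α := by
    rcases hαnn.lt_or_eq with hpos | heq
    · exact hpos
    · exfalso
      have h1 := hsep y1 t1 (le_of_eq hy1r)
      rw [← heq] at h1 hlt
      nlinarith
  obtain ⟨c, hc, _⟩ := minorant_of_sep hα hbot hlt hsep
  exact ⟨c, hc⟩

lemma envelope_lt (hbot : ∀ x : ℝ, h x ≠ ⊥) (hnetop : ∃ x : ℝ, h x ≠ ⊤)
    (hlsc : LowerSemicontinuous h)
    (hconv : Convex ℝ {u : ℝ × ℝ | h u.2 ≤ (u.1 : EReal)})
    {y0 t0 : ℝ} (hty : ((t0 : EReal)) < h y0) :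
    ∃ c ∈ mino h, t0 < c.1 * y0 + c.2 := by
  obtain ⟨α, β, u, hαnn, hlt, hsep⟩ := sep hbot hnetop hlsc hconv (not_le.2 hty)
  rcases hαnn.lt_or_eq with hα | hα0
  · exact minorant_of_sep hα hbot hlt hsep
  · -- vertical separation: β * y < u fails on dom h ... combine with base minorant
    obtain ⟨c0, hc0⟩ := mino_nonempty hbot hnetop hlsc hconv
    have hy0 : β * y0 < u := by rw [← hα0] at hlt; linarith
    have hdom : ∀ y : ℝ, h y ≠ ⊤ → u < β * y := by
      intro y hy
      have hyr : h y = (((h y).toReal : ℝ) : EReal) := (EReal.coe_toReal hy (hbot y)).symm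
      have := hsep y (h y).toReal (le_of_eq hyr)
      rw [← hα0] at this; linarith
    set M : ℝ := max 0 ((t0 - (c0.1 * y0 + c0.2)) / (u - β * y0) + 1) with hM
    have hMnn : 0 ≤ M := le_max_left _ _
    refine ⟨(c0.1 - M * β, c0.2 + M * u), ?_, ?_⟩
    · intro y
      rcases eq_or_ne (h y) ⊤ with hy | hy
      · rw [hy]; exact le_top
      · refine le_trans ?_ (hc0 y)
        refine EReal.coe_le_coe_iff.2 ?_
        have := hdom y hy
        have hprod : 0 ≤ M * (β * y - u) := mul_nonneg hMnn (by linarith)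
        simp only
        nlinarith [hprod]
    · simp only
      have h1 : (t0 - (c0.1 * y0 + c0.2)) / (u - β * y0) + 1 ≤ M := le_max_right _ _
      have h2 : 0 < u - β * y0 := by linarith
      have h3 : (t0 - (c0.1 * y0 + c0.2)) / (u - β * y0) < M := by linarith
      rw [div_lt_iff₀ h2] at h3
      nlinarith


lemma aff_le (c : ℝ × ℝ) (y : ℝ) : aff h c y 1 ≤ h y := by
  unfold aff
  split
  · rename_i hc
    have := hc y
    rw [mul_one]
    exact this
  · exact bot_le

lemma envelope (N : Nice h) (y : ℝ) : h y = ⨆ c, aff h c y 1 := by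
  apply le_antisymm
  · rw [← EReal.ge_of_forall_gt_iff_ge]
    intro z hz
    obtain ⟨c, hc, hlt⟩ := envelope_lt N.hbot N.hnetop N.hlsc N.hconv hz
    have h1 : ((z : ℝ) : EReal) ≤ aff h c y 1 := by
      rw [aff, if_pos hc, mul_one]
      exact_mod_cast hlt.le
    exact h1.trans (le_iSup (fun c => aff h c y 1) c)
  · exact iSup_le fun c => aff_le c y

lemma aff_smul {t : ℝ} (ht : 0 < t) (c : ℝ × ℝ) (x w : ℝ) :
    aff h c (t * x) (t * w) = (t : EReal) * aff h c x w := by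
  unfold aff
  split
  · rw [← EReal.coe_mul]
    norm_cast
    ring
  · rw [EReal.coe_mul_bot_of_pos ht]

lemma mul_iSup'' {ι : Sort*} {t : ℝ} (ht : 0 < t) (f : ι → EReal) :
    (t : EReal) * (⨆ i, f i) = ⨆ i, (t : EReal) * f i := by
  have htE : (0 : EReal) < (t : EReal) := by exact_mod_cast ht
  have htT : (t : EReal) ≠ ⊤ := EReal.coe_ne_top t
  apply le_antisymm
  · rw [EReal.mul_comm, ← EReal.le_div_iff_mul_le htE htT]
    refine iSup_le fun i => ?_
    rw [EReal.le_div_iff_mul_le htE htT, EReal.mul_comm]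
    exact le_iSup (fun i => (t : EReal) * f i) i
  · exact iSup_le fun i => mul_le_mul_of_nonneg_left (le_iSup f i) htE.le

lemma aff_antitone (N : Nice h) (c : ℝ × ℝ) (x : ℝ) {w w' : ℝ} (hw : 0 ≤ w) (hww : w ≤ w') :
    aff h c x w' ≤ aff h c x w := by
  unfold aff
  split
  · rename_i hc
    have h2 := mino_snd_nonpos N.h0 hc
    refine EReal.coe_le_coe_iff.2 ?_
    nlinarith
  · exact bot_le

lemma persp_pos_eq {w : ℝ} (hw : 0 < w) (x : ℝ) :
    perspCl h x w = (w : EReal) * h (x / w) := if_pos hw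

lemma persp_rep_pos (N : Nice h) (x : ℝ) {w : ℝ} (hw : 0 < w) :
    perspCl h x w = ⨆ c, aff h c x w := by
  rw [persp_pos_eq hw, envelope N (x / w), mul_iSup'' hw]
  congr 1
  funext c
  rw [← aff_smul hw]
  congr 1 <;> field_simp

lemma persp_rep (N : Nice h) (x : ℝ) {w : ℝ} (hw : 0 ≤ w) :
    perspCl h x w = ⨆ c, aff h c x w := by
  rcases hw.lt_or_eq with hpos | heq
  · exact persp_rep_pos N x hpos
  · subst heq
    have hval : ∀ s ∈ Ioi (0:ℝ), ((s : EReal) * h (x / s)) = ⨆ c, aff h c x s := by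
      intro s hs
      rw [← persp_pos_eq hs, persp_rep_pos N x hs]
    have hanti : AntitoneOn (fun s : ℝ => (s : EReal) * h (x / s)) (Ioi 0) := by
      intro s1 hs1 s2 hs2 hle
      show ((s2:ℝ) : EReal) * h (x / s2) ≤ ((s1:ℝ) : EReal) * h (x / s1)
      rw [hval s1 hs1, hval s2 hs2]
      exact iSup_mono fun c => aff_antitone N c x (le_of_lt hs1) hle
    have htends := hanti.tendsto_nhdsGT (OrderTop.bddAbove _)
    have hlim : perspCl h x 0 =
        sSup ((fun s : ℝ => (s : EReal) * h (x / s)) '' Ioi 0) := by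
      rw [perspCl, if_neg (lt_irrefl 0), if_pos rfl]
      exact htends.limUnder_eq
    rw [hlim]
    apply le_antisymm
    · refine sSup_le ?_
      rintro _ ⟨s, hs, rfl⟩
      show ((s:ℝ) : EReal) * h (x / s) ≤ _
      rw [hval s hs]
      exact iSup_mono fun c => aff_antitone N c x le_rfl (le_of_lt hs)
    · refine iSup_le fun c => ?_
      by_cases hc : c ∈ mino h
      · rw [aff, if_pos hc]
        rw [← EReal.ge_of_forall_gt_iff_ge]
        intro z hz
        have hz' : z < c.1 * x + c.2 * 0 := by exact_mod_cast hz
        rw [mul_zero, add_zero] at hz'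
        have h2 := mino_snd_nonpos N.h0 hc
        set D : ℝ := c.1 * x - z with hD
        have hDpos : 0 < D := by linarith
        set s₀ : ℝ := D / (1 - c.2) with hs₀
        have h1c : 0 < 1 - c.2 := by linarith
        have hs₀pos : 0 < s₀ := div_pos hDpos h1c
        have hkey : z < c.1 * x + c.2 * s₀ := by
          rw [hs₀]
          rw [show c.1 * x = z + D by rw [hD]; ring]
          have : -D < c.2 * (D / (1 - c.2)) := by
            rw [mul_div_assoc', lt_div_iff₀ h1c]
            nlinarith
          linarith
        have hle1 : ((z : ℝ) : EReal) ≤ (s₀ : EReal) * h (x / s₀) := by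
          rw [hval s₀ hs₀pos]
          refine le_trans ?_ (le_iSup _ c)
          rw [aff, if_pos hc]
          exact_mod_cast hkey.le
        exact hle1.trans (le_sSup ⟨s₀, hs₀pos, rfl⟩)
      · rw [aff, if_neg hc]
        exact bot_le


lemma persp_nonneg_of_le {x w : ℝ} {γ : ℝ} (hle : perspCl h x w ≤ (γ : EReal)) : 0 ≤ w := by
  by_contra hneg
  push_neg at hneg
  rw [perspCl, if_neg (by linarith), if_neg (ne_of_lt hneg)] at hle
  exact (EReal.coe_lt_top γ).not_ge hle

lemma persp_le_iff (N : Nice h) {x w γ : ℝ} :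
    perspCl h x w ≤ (γ : EReal) ↔ 0 ≤ w ∧ ∀ c, aff h c x w ≤ (γ : EReal) := by
  constructor
  · intro H
    have hw := persp_nonneg_of_le H
    rw [persp_rep N x hw] at H
    exact ⟨hw, fun c => (le_iSup (fun c => aff h c x w) c).trans H⟩
  · rintro ⟨hw, H⟩
    rw [persp_rep N x hw]
    exact iSup_le H

lemma persp_one (x : ℝ) : perspCl h x 1 = h x := by
  rw [perspCl, if_pos one_pos, div_one]
  norm_num

lemma persp_zero_zero (N : Nice h) : perspCl h 0 0 = 0 := by
  rw [persp_rep N 0 le_rfl]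
  apply le_antisymm
  · refine iSup_le fun c => ?_
    rw [aff]
    split
    · norm_num
    · exact bot_le
  · obtain ⟨c0, hc0⟩ := mino_nonempty N.hbot N.hnetop N.hlsc N.hconv
    refine le_trans ?_ (le_iSup (fun c => aff h c 0 0) c0)
    rw [aff, if_pos hc0]
    norm_num

lemma persp_antitone (N : Nice h) {x w w' : ℝ} (h0w : 0 ≤ w) (hww : w ≤ w') :
    perspCl h x w' ≤ perspCl h x w := by
  rw [persp_rep N x h0w, persp_rep N x (h0w.trans hww)]
  exact iSup_mono fun c => aff_antitone N c x h0w hww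

lemma persp_scale (N : Nice h) {t : ℝ} (ht : 0 < t) (x : ℝ) {w : ℝ} (hw : 0 ≤ w) :
    perspCl h (t * x) (t * w) = (t : EReal) * perspCl h x w := by
  rw [persp_rep N x hw, persp_rep N (t * x) (by positivity), mul_iSup'' ht]
  congr 1
  funext c
  exact aff_smul ht c x w

lemma persp_finite (N : Nice h) {x w γ : ℝ} (hw : 0 < w)
    (hle : perspCl h x w ≤ (γ : EReal)) :
    h (x / w) = (((h (x / w)).toReal : ℝ) : EReal) ∧ w * (h (x / w)).toReal ≤ γ := by
  rw [persp_pos_eq hw] at hle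
  have hwE : (0 : EReal) < (w : EReal) := by exact_mod_cast hw
  have hdiv : h (x / w) ≤ ((γ / w : ℝ) : EReal) := by
    rw [EReal.coe_div, EReal.le_div_iff_mul_le hwE (EReal.coe_ne_top w), EReal.mul_comm]
    exact hle
  have hne : h (x / w) ≠ ⊤ := ne_top_of_le_ne_top (EReal.coe_ne_top _) hdiv
  have heq : h (x / w) = (((h (x / w)).toReal : ℝ) : EReal) :=
    (EReal.coe_toReal hne (N.hbot _)).symm
  refine ⟨heq, ?_⟩
  rw [heq] at hle
  rw [← EReal.coe_mul] at hle
  exact_mod_cast hle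


/-- The region cut out by one perspective constraint, in coordinates `(x, w, γ)`. -/
def Kset (h : ℝ → EReal) : Set (ℝ × ℝ × ℝ) :=
  {u | 0 ≤ u.2.1 ∧ ∀ c, aff h c u.1 u.2.1 ≤ (u.2.2 : EReal)}

lemma Kset_eq (N : Nice h) :
    {u : ℝ × ℝ × ℝ | perspCl h u.1 u.2.1 ≤ (u.2.2 : EReal)} = Kset h := by
  ext u
  exact persp_le_iff N

lemma Kset_decomp :
    Kset h = {u : ℝ × ℝ × ℝ | 0 ≤ u.2.1} ∩
      ⋂ c : ℝ × ℝ, {u : ℝ × ℝ × ℝ | aff h c u.1 u.2.1 ≤ (u.2.2 : EReal)} := by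
  ext u
  simp [Kset, Set.mem_iInter]

lemma aff_set_eq_of_mem {c : ℝ × ℝ} (hc : c ∈ mino h) :
    {u : ℝ × ℝ × ℝ | aff h c u.1 u.2.1 ≤ (u.2.2 : EReal)} =
      {u : ℝ × ℝ × ℝ | c.1 * u.1 + c.2 * u.2.1 ≤ u.2.2} := by
  ext u
  rw [Set.mem_setOf_eq, Set.mem_setOf_eq, aff, if_pos hc, EReal.coe_le_coe_iff]

lemma aff_set_eq_of_not_mem {c : ℝ × ℝ} (hc : c ∉ mino h) :
    {u : ℝ × ℝ × ℝ | aff h c u.1 u.2.1 ≤ (u.2.2 : EReal)} = Set.univ := by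
  ext u
  simp [aff, if_neg hc]

lemma Kset_closed : IsClosed (Kset h) := by
  rw [Kset_decomp]
  apply IsClosed.inter
  · exact isClosed_le continuous_const (continuous_fst.comp continuous_snd)
  · refine isClosed_iInter fun c => ?_
    by_cases hc : c ∈ mino h
    · rw [aff_set_eq_of_mem hc]
      apply isClosed_le
      · fun_prop
      · fun_prop
    · rw [aff_set_eq_of_not_mem hc]
      exact isClosed_univ

lemma Kset_convex : Convex ℝ (Kset h) := by
  rw [Kset_decomp]
  apply Convex.inter
  · intro u hu v hv a b ha hb hab
    simp only [Set.mem_setOf_eq] at *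
    have : (a • u + b • v).2.1 = a * u.2.1 + b * v.2.1 := rfl
    rw [this]
    nlinarith
  · refine convex_iInter fun c => ?_
    by_cases hc : c ∈ mino h
    · rw [aff_set_eq_of_mem hc]
      intro u hu v hv a b ha hb hab
      simp only [Set.mem_setOf_eq] at *
      have h1 : (a • u + b • v).1 = a * u.1 + b * v.1 := rfl
      have h2 : (a • u + b • v).2.1 = a * u.2.1 + b * v.2.1 := rfl
      have h3 : (a • u + b • v).2.2 = a * u.2.2 + b * v.2.2 := rfl
      rw [h1, h2, h3]
      nlinarith [mul_le_mul_of_nonneg_left hu ha, mul_le_mul_of_nonneg_left hv hb]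
    · rw [aff_set_eq_of_not_mem hc]
      exact convex_univ


lemma exact_mem {n p : ℕ} (hpn : p ≤ n)
    (q r : Fin p → ℕ) (hq : ∀ i, 0 < q i)
    (h : Fin p → ℝ → EReal) (N : ∀ i, Nice (h i))
    (C : ∀ i : Fin p, (Fin (q i) → ℝ) →ₗ[ℝ] (Fin (r i) → ℝ))
    (CC : ∀ i : Fin p, Set (Fin (r i) → ℝ))
    (hCC0 : ∀ i, (0 : Fin (r i) → ℝ) ∈ CC i)
    (hCCcone : ∀ i, ∀ c ∈ CC i, ∀ lam : ℝ, 0 < lam → lam • c ∈ CC i)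
    (Δ : Set (Fin n → ℝ))
    (hΔ : ∀ δ ∈ Δ, ∀ j : Fin n, δ j = 0 ∨ δ j = 1)
    (b : (∀ i : Fin p, Fin (q i) → ℝ) × (Fin p → ℝ) × (Fin n → ℝ))
    (hpersp : ∀ i : Fin p,
      perspCl (h i) (b.1 i ⟨0, hq i⟩) (b.2.2 (Fin.castLE hpn i)) ≤ (b.2.1 i : EReal))
    (hC : ∀ i : Fin p, C i (b.1 i) ∈ CC i)
    (hδ : b.2.2 ∈ convexHull ℝ Δ)
    (hwpos : ∀ i : Fin p, 0 < b.2.2 (Fin.castLE hpn i)) :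
    b ∈ convexHull ℝ
      {b : (∀ i : Fin p, Fin (q i) → ℝ) × (Fin p → ℝ) × (Fin n → ℝ) |
        (∀ i : Fin p, h i (b.1 i ⟨0, hq i⟩) ≤ (b.2.1 i : EReal)) ∧
        (∀ i : Fin p, b.1 i ⟨0, hq i⟩ * (1 - b.2.2 (Fin.castLE hpn i)) = 0) ∧
        (∀ i : Fin p, C i (b.1 i) ∈ CC i) ∧
        b.2.2 ∈ Δ} := by
  classical
  rw [convexHull_eq] at hδ
  obtain ⟨ι, t, lam, z, hlam0, hlam1, hzΔ, hcm⟩ := hδ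
  set x : Fin p → ℝ := fun i => b.1 i ⟨0, hq i⟩ with hx
  set w : Fin p → ℝ := fun i => b.2.2 (Fin.castLE hpn i) with hw
  have hδsum : b.2.2 = ∑ k ∈ t, lam k • z k := by
    rw [← hcm, Finset.centerMass_eq_of_sum_1 _ _ hlam1]
  have hδj : ∀ j, b.2.2 j = ∑ k ∈ t, lam k * z k j := by
    intro j
    rw [hδsum]
    simp [Finset.sum_apply]
  set H : Fin p → ℝ := fun i => (h i (x i / w i)).toReal with hH
  have hfin : ∀ i, h i (x i / w i) = ((H i : ℝ) : EReal) ∧ w i * H i ≤ b.2.1 i :=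
    fun i => persp_finite (N i) (hwpos i) (hpersp i)
  set e : Fin p → ℝ := fun i => b.2.1 i - w i * H i with he
  have he0 : ∀ i, 0 ≤ e i := fun i => by
    have := (hfin i).2; simp only [he]; linarith
  set bk : ι → (∀ i : Fin p, Fin (q i) → ℝ) × (Fin p → ℝ) × (Fin n → ℝ) := fun k =>
    (fun i => if z k (Fin.castLE hpn i) = 1 then (w i)⁻¹ • b.1 i else 0,
     fun i => if z k (Fin.castLE hpn i) = 1 then H i + e i / w i else 0,
     z k) with hbk
  have hmemW : ∀ k ∈ t, bk k ∈
      {b : (∀ i : Fin p, Fin (q i) → ℝ) × (Fin p → ℝ) × (Fin n → ℝ) |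
        (∀ i : Fin p, h i (b.1 i ⟨0, hq i⟩) ≤ (b.2.1 i : EReal)) ∧
        (∀ i : Fin p, b.1 i ⟨0, hq i⟩ * (1 - b.2.2 (Fin.castLE hpn i)) = 0) ∧
        (∀ i : Fin p, C i (b.1 i) ∈ CC i) ∧
        b.2.2 ∈ Δ} := by
    intro k hk
    refine ⟨?_, ?_, ?_, hzΔ k hk⟩
    · intro i
      rcases hΔ (z k) (hzΔ k hk) (Fin.castLE hpn i) with h0' | h1'
      · simp only [hbk, h0', if_neg (by norm_num : (0:ℝ) ≠ 1)]
        rw [Pi.zero_apply, (N i).h0]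
        exact_mod_cast le_refl (0 : EReal)
      · simp only [hbk, h1', eq_self_iff_true, if_true]
        rw [Pi.smul_apply, smul_eq_mul, inv_mul_eq_div,
          show b.1 i ⟨0, hq i⟩ = x i from rfl, (hfin i).1]
        refine EReal.coe_le_coe_iff.2 ?_
        have : 0 ≤ e i / w i := div_nonneg (he0 i) (hwpos i).le
        linarith
    · intro i
      rcases hΔ (z k) (hzΔ k hk) (Fin.castLE hpn i) with h0' | h1'
      · simp only [hbk, h0', if_neg (by norm_num : (0:ℝ) ≠ 1)]
        simp
      · simp only [hbk, h1']
        simp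
    · intro i
      rcases hΔ (z k) (hzΔ k hk) (Fin.castLE hpn i) with h0' | h1'
      · simp only [hbk, h0', if_neg (by norm_num : (0:ℝ) ≠ 1)]
        rw [map_zero]
        exact hCC0 i
      · simp only [hbk, h1', eq_self_iff_true, if_true]
        rw [map_smul]
        exact hCCcone i _ (hC i) _ (inv_pos.2 (hwpos i))
  have hwne : ∀ i, w i ≠ 0 := fun i => (hwpos i).ne'
  have hδw : ∀ i : Fin p, ∑ k ∈ t, lam k * z k (Fin.castLE hpn i) = w i :=
    fun i => (hδj (Fin.castLE hpn i)).symm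
  have hsum : ∑ k ∈ t, lam k • bk k = b := by
    refine Prod.ext ?_ (Prod.ext ?_ ?_)
    · rw [Prod.fst_sum]
      funext i
      rw [Finset.sum_apply]
      have hterm : ∀ k ∈ t,
          (lam k • bk k).1 i = (lam k * z k (Fin.castLE hpn i) * (w i)⁻¹) • b.1 i := by
        intro k hk
        show lam k • (bk k).1 i = _
        rcases hΔ (z k) (hzΔ k hk) (Fin.castLE hpn i) with h0' | h1'
        · simp [hbk, h0', if_neg (by norm_num : (0:ℝ) ≠ 1)]
        · simp only [hbk, h1', eq_self_iff_true, if_true, mul_one, smul_smul]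
      rw [Finset.sum_congr rfl hterm, ← Finset.sum_smul]
      have hc : ∑ k ∈ t, lam k * z k (Fin.castLE hpn i) * (w i)⁻¹ = 1 := by
        rw [← Finset.sum_mul, hδw i]
        exact mul_inv_cancel₀ (hwne i)
      rw [hc, one_smul]
    · rw [Prod.snd_sum, Prod.fst_sum]
      funext i
      rw [Finset.sum_apply]
      have hterm : ∀ k ∈ t,
          (lam k • bk k).2.1 i = lam k * z k (Fin.castLE hpn i) * (H i + e i / w i) := by
        intro k hk
        show lam k • (bk k).2.1 i = _
        rcases hΔ (z k) (hzΔ k hk) (Fin.castLE hpn i) with h0' | h1'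
        · simp [hbk, h0', if_neg (by norm_num : (0:ℝ) ≠ 1)]
        · simp only [hbk, h1', eq_self_iff_true, if_true, mul_one, smul_eq_mul]
      rw [Finset.sum_congr rfl hterm, ← Finset.sum_mul, hδw i]
      show w i * (H i + e i / w i) = b.2.1 i
      rw [mul_add, mul_div_cancel₀ _ (hwne i)]
      show w i * H i + (b.2.1 i - w i * H i) = b.2.1 i
      ring
    · rw [Prod.snd_sum, Prod.snd_sum]
      have hterm : ∀ k ∈ t, (lam k • bk k).2.2 = lam k • z k := fun k _ => rfl
      rw [Finset.sum_congr rfl hterm, ← hδsum]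
  rw [← hsum, ← Finset.centerMass_eq_of_sum_1 _ _ hlam1]
  exact Finset.centerMass_mem_convexHull t hlam0 (by rw [hlam1]; exact one_pos) hmemW

end PerspAux

/-- Closed convex hull of the mixed-binary set `W` (Proposition on `W`):
if for every `i ∈ [p]` there is `δ ∈ Δ` with `δ_i = 1`, then
`cl conv(W)` is described by the perspective closures `h_i^π`. -/
theorem closure_convexHull_W {n p : ℕ} (hp : 0 < p) (hpn : p ≤ n)
    (q r : Fin p → ℕ) (hq : ∀ i, 0 < q i)
    (h : Fin p → ℝ → EReal)
    (hbot : ∀ i, ∀ x : ℝ, h i x ≠ ⊥) (hnetop : ∀ i, ∃ x : ℝ, h i x ≠ ⊤)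
    (hlsc : ∀ i, LowerSemicontinuous (h i))
    (hconv : ∀ i, Convex ℝ {u : ℝ × ℝ | h i u.2 ≤ (u.1 : EReal)})
    (h0 : ∀ i, h i 0 = 0)
    (C : ∀ i : Fin p, (Fin (q i) → ℝ) →ₗ[ℝ] (Fin (r i) → ℝ))
    (CC : ∀ i : Fin p, Set (Fin (r i) → ℝ))
    (hCCconv : ∀ i, Convex ℝ (CC i)) (hCCcl : ∀ i, IsClosed (CC i))
    (hCC0 : ∀ i, (0 : Fin (r i) → ℝ) ∈ CC i)
    (hCCcone : ∀ i, ∀ c ∈ CC i, ∀ lam : ℝ, 0 < lam → lam • c ∈ CC i)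
    (Δ : Set (Fin n → ℝ))
    (hΔ : ∀ δ ∈ Δ, ∀ j : Fin n, δ j = 0 ∨ δ j = 1)
    (hΔ1 : ∀ i : Fin p, ∃ δ ∈ Δ, δ (Fin.castLE hpn i) = 1) :
    closure (convexHull ℝ
      {b : (∀ i : Fin p, Fin (q i) → ℝ) × (Fin p → ℝ) × (Fin n → ℝ) |
        (∀ i : Fin p, h i (b.1 i ⟨0, hq i⟩) ≤ (b.2.1 i : EReal)) ∧
        (∀ i : Fin p, b.1 i ⟨0, hq i⟩ * (1 - b.2.2 (Fin.castLE hpn i)) = 0) ∧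
        (∀ i : Fin p, C i (b.1 i) ∈ CC i) ∧
        b.2.2 ∈ Δ})
      = {b : (∀ i : Fin p, Fin (q i) → ℝ) × (Fin p → ℝ) × (Fin n → ℝ) |
        (∀ i : Fin p, perspCl (h i) (b.1 i ⟨0, hq i⟩) (b.2.2 (Fin.castLE hpn i)) ≤ (b.2.1 i : EReal)) ∧
        (∀ i : Fin p, C i (b.1 i) ∈ CC i) ∧
        b.2.2 ∈ convexHull ℝ Δ} := by
  classical
  have N : ∀ i, PerspAux.Nice (h i) := fun i => ⟨hbot i, hnetop i, hlsc i, hconv i, h0 i⟩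
  set W : Set ((∀ i : Fin p, Fin (q i) → ℝ) × (Fin p → ℝ) × (Fin n → ℝ)) :=
      {b | (∀ i : Fin p, h i (b.1 i ⟨0, hq i⟩) ≤ (b.2.1 i : EReal)) ∧
        (∀ i : Fin p, b.1 i ⟨0, hq i⟩ * (1 - b.2.2 (Fin.castLE hpn i)) = 0) ∧
        (∀ i : Fin p, C i (b.1 i) ∈ CC i) ∧
        b.2.2 ∈ Δ} with hWdef
  set S : Set ((∀ i : Fin p, Fin (q i) → ℝ) × (Fin p → ℝ) × (Fin n → ℝ)) :=
      {b | (∀ i : Fin p, perspCl (h i) (b.1 i ⟨0, hq i⟩) (b.2.2 (Fin.castLE hpn i)) ≤ (b.2.1 i : EReal)) ∧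
        (∀ i : Fin p, C i (b.1 i) ∈ CC i) ∧
        b.2.2 ∈ convexHull ℝ Δ} with hSdef
  -- Δ is finite, so its convex hull is closed
  have hΔfin : Δ.Finite := by
    refine Set.Finite.subset (Set.Finite.pi (fun _ : Fin n =>
      (Set.finite_singleton (1:ℝ)).insert 0)) ?_
    intro δ hδm
    rw [Set.mem_pi]
    intro j _
    rcases hΔ δ hδm j with h' | h' <;> simp [h']
  have hhullcl : IsClosed (convexHull ℝ Δ) := (hΔfin.isCompact_convexHull ℝ).isClosed
  -- S is closed
  have hSdecomp : S =
      (⋂ i : Fin p, (fun b : (∀ i : Fin p, Fin (q i) → ℝ) × (Fin p → ℝ) × (Fin n → ℝ) =>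
          (b.1 i ⟨0, hq i⟩, b.2.2 (Fin.castLE hpn i), b.2.1 i)) ⁻¹' PerspAux.Kset (h i)) ∩
      ((⋂ i : Fin p, (fun b : (∀ i : Fin p, Fin (q i) → ℝ) × (Fin p → ℝ) × (Fin n → ℝ) =>
          C i (b.1 i)) ⁻¹' CC i) ∩
       ((fun b : (∀ i : Fin p, Fin (q i) → ℝ) × (Fin p → ℝ) × (Fin n → ℝ) =>
          b.2.2) ⁻¹' convexHull ℝ Δ)) := by
    ext b
    simp only [hSdef, Set.mem_setOf_eq, Set.mem_inter_iff, Set.mem_iInter, Set.mem_preimage]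
    constructor
    · rintro ⟨h1, h2, h3⟩
      exact ⟨fun i => (Set.ext_iff.1 (PerspAux.Kset_eq (N i)) _).1 (h1 i), h2, h3⟩
    · rintro ⟨h1, h2, h3⟩
      exact ⟨fun i => (Set.ext_iff.1 (PerspAux.Kset_eq (N i)) _).2 (h1 i), h2, h3⟩
  have hSclosed : IsClosed S := by
    rw [hSdecomp]
    refine IsClosed.inter (isClosed_iInter fun i => ?_)
      (IsClosed.inter (isClosed_iInter fun i => ?_) ?_)
    · refine IsClosed.preimage ?_ PerspAux.Kset_closed
      fun_prop
    · refine IsClosed.preimage ?_ (hCCcl i)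
      exact (C i).continuous_of_finiteDimensional.comp (by fun_prop)
    · refine IsClosed.preimage (by fun_prop) hhullcl
  -- S is convex
  have hSconv : Convex ℝ S := by
    intro u hu v hv a b' ha hb' hab
    obtain ⟨hu1, hu2, hu3⟩ := hu
    obtain ⟨hv1, hv2, hv3⟩ := hv
    refine ⟨?_, ?_, ?_⟩
    · intro i
      have hKu : (u.1 i ⟨0, hq i⟩, u.2.2 (Fin.castLE hpn i), u.2.1 i) ∈ PerspAux.Kset (h i) :=
        (Set.ext_iff.1 (PerspAux.Kset_eq (N i)) _).1 (hu1 i)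
      have hKv : (v.1 i ⟨0, hq i⟩, v.2.2 (Fin.castLE hpn i), v.2.1 i) ∈ PerspAux.Kset (h i) :=
        (Set.ext_iff.1 (PerspAux.Kset_eq (N i)) _).1 (hv1 i)
      have hK := PerspAux.Kset_convex hKu hKv ha hb' hab
      exact (Set.ext_iff.1 (PerspAux.Kset_eq (N i)) _).2 hK
    · intro i
      have : (a • u + b' • v).1 i = a • u.1 i + b' • v.1 i := rfl
      rw [this, map_add, map_smul, map_smul]
      exact hCCconv i (hu2 i) (hv2 i) ha hb' hab
    · exact (convex_convexHull ℝ Δ) hu3 hv3 ha hb' hab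
  -- W ⊆ S
  have hWS : W ⊆ S := by
    rintro b ⟨hb1, hb2, hb3, hb4⟩
    refine ⟨?_, hb3, subset_convexHull ℝ Δ hb4⟩
    intro i
    rcases hΔ b.2.2 hb4 (Fin.castLE hpn i) with hz0 | hz1
    · have hx0 : b.1 i ⟨0, hq i⟩ = 0 := by
        have := hb2 i
        rw [hz0] at this
        simpa using this
      rw [hx0, hz0, PerspAux.persp_zero_zero (N i)]
      have := hb1 i
      rw [hx0, h0 i] at this
      exact this
    · rw [hz1, PerspAux.persp_one]
      exact hb1 i
  apply Set.Subset.antisymm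
  · exact closure_minimal (convexHull_min hWS hSconv) hSclosed
  · -- S ⊆ closure (convexHull W)
    intro b hb
    obtain ⟨hb1, hb2, hb3⟩ := hb
    have hwnn : ∀ i : Fin p, 0 ≤ b.2.2 (Fin.castLE hpn i) :=
      fun i => PerspAux.persp_nonneg_of_le (hb1 i)
    choose δstar hδstarΔ hδstar1 using hΔ1
    set δbar : Fin n → ℝ := (p : ℝ)⁻¹ • ∑ i : Fin p, δstar i with hδbar
    have hppos : (0:ℝ) < p := by exact_mod_cast hp
    have hδbarhull : δbar ∈ convexHull ℝ Δ := by
      have h1 := Finset.centerMass_mem_convexHull (Finset.univ : Finset (Fin p))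
        (w := fun _ => (1:ℝ)) (z := δstar) (fun i _ => zero_le_one)
        (by simpa [Finset.card_univ] using hppos) (fun i _ => hδstarΔ i)
      have h2 : (Finset.univ : Finset (Fin p)).centerMass (fun _ => (1:ℝ)) δstar = δbar := by
        rw [Finset.centerMass]
        simp [hδbar, Finset.card_univ]
      rwa [h2] at h1
    have hδbarlb : ∀ i : Fin p, (p:ℝ)⁻¹ ≤ δbar (Fin.castLE hpn i) := by
      intro i
      have hsum : (1:ℝ) ≤ ∑ i' : Fin p, δstar i' (Fin.castLE hpn i) := by
        have := Finset.single_le_sum (f := fun i' => δstar i' (Fin.castLE hpn i))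
          (fun i' _ => by rcases hΔ _ (hδstarΔ i') (Fin.castLE hpn i) with h'|h' <;> simp [h'])
          (Finset.mem_univ i)
        simpa [hδstar1 i] using this
      have hval : δbar (Fin.castLE hpn i)
          = (p:ℝ)⁻¹ * ∑ i' : Fin p, δstar i' (Fin.castLE hpn i) := by
        rw [hδbar]
        simp [Finset.sum_apply]
      rw [hval]
      calc (p:ℝ)⁻¹ = (p:ℝ)⁻¹ * 1 := by ring
      _ ≤ _ := mul_le_mul_of_nonneg_left hsum (by positivity)
    set ε : ℕ → ℝ := fun m => ((m:ℝ)+1)⁻¹ with hεdef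
    have hεpos : ∀ m, 0 < ε m := fun m => by positivity
    have hεle : ∀ m, ε m ≤ 1 := fun m => by
      rw [hεdef]
      rw [inv_le_one₀ (by positivity)]
      simp
    set δm : ℕ → Fin n → ℝ := fun m => (1 - ε m) • b.2.2 + ε m • δbar with hδm
    set tc : Fin p → ℕ → ℝ := fun i m =>
      if b.2.2 (Fin.castLE hpn i) = 0 then 1
      else (δm m (Fin.castLE hpn i)) / (b.2.2 (Fin.castLE hpn i)) with htc
    set bm : ℕ → (∀ i : Fin p, Fin (q i) → ℝ) × (Fin p → ℝ) × (Fin n → ℝ) := fun m =>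
      (fun i => tc i m • b.1 i, fun i => tc i m * b.2.1 i, δm m) with hbm
    have hδmj : ∀ m j, δm m j = (1 - ε m) * b.2.2 j + ε m * δbar j := by
      intro m j; rw [hδm]; simp
    have hwm : ∀ m (i : Fin p), 0 < δm m (Fin.castLE hpn i) := by
      intro m i
      rw [hδmj]
      have h1 : 0 ≤ (1 - ε m) * b.2.2 (Fin.castLE hpn i) :=
        mul_nonneg (by linarith [hεle m]) (hwnn i)
      have h2 : ε m * (p:ℝ)⁻¹ ≤ ε m * δbar (Fin.castLE hpn i) :=
        mul_le_mul_of_nonneg_left (hδbarlb i) (hεpos m).le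
      have h3 : 0 < ε m * (p:ℝ)⁻¹ := by positivity
      linarith
    have htcpos : ∀ (i : Fin p) m, 0 < tc i m := by
      intro i m
      simp only [htc]
      split
      · exact one_pos
      · rename_i hne
        exact div_pos (hwm m i) ((hwnn i).lt_of_ne (Ne.symm hne))
    have hmem : ∀ m, bm m ∈ convexHull ℝ W := by
      intro m
      apply PerspAux.exact_mem hpn q r hq h N C CC hCC0 hCCcone Δ hΔ (bm m)
      · -- perspective conditions
        intro i
        show perspCl (h i) ((tc i m • b.1 i) ⟨0, hq i⟩) (δm m (Fin.castLE hpn i)) ≤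
          ((tc i m * b.2.1 i : ℝ) : EReal)
        rcases (hwnn i).lt_or_eq with hwpos' | hweq
        · have hne : b.2.2 (Fin.castLE hpn i) ≠ 0 := hwpos'.ne'
          have htceq : δm m (Fin.castLE hpn i) = tc i m * b.2.2 (Fin.castLE hpn i) := by
            simp only [htc, if_neg hne]
            rw [div_mul_cancel₀ _ hne]
          rw [Pi.smul_apply, smul_eq_mul, htceq,
            PerspAux.persp_scale (N i) (htcpos i m) _ (hwnn i)]
          calc ((tc i m : ℝ) : EReal) *
              perspCl (h i) (b.1 i ⟨0, hq i⟩) (b.2.2 (Fin.castLE hpn i))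
              ≤ ((tc i m : ℝ) : EReal) * ((b.2.1 i : ℝ) : EReal) :=
                mul_le_mul_of_nonneg_left (hb1 i) (by exact_mod_cast (htcpos i m).le)
          _ = ((tc i m * b.2.1 i : ℝ) : EReal) := by rw [← EReal.coe_mul]
        · have hweq' : b.2.2 (Fin.castLE hpn i) = 0 := hweq.symm
          have htc1 : tc i m = 1 := by simp only [htc, if_pos hweq']
          rw [htc1, one_smul, one_mul]
          calc perspCl (h i) (b.1 i ⟨0, hq i⟩) (δm m (Fin.castLE hpn i))
              ≤ perspCl (h i) (b.1 i ⟨0, hq i⟩) 0 :=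
                PerspAux.persp_antitone (N i) le_rfl (hwm m i).le
          _ ≤ ((b.2.1 i : ℝ) : EReal) := by
                have := hb1 i
                rwa [hweq'] at this
      · intro i
        show C i (tc i m • b.1 i) ∈ CC i
        rw [map_smul]
        exact hCCcone i _ (hb2 i) _ (htcpos i m)
      · show δm m ∈ convexHull ℝ Δ
        rw [hδm]
        exact (convex_convexHull ℝ Δ) hb3 hδbarhull (by linarith [hεle m]) (hεpos m).le
          (by ring)
      · intro i
        exact hwm m i
    have hεtends : Filter.Tendsto ε Filter.atTop (nhds 0) := by
      rw [hεdef]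
      simpa [one_div] using tendsto_one_div_add_atTop_nhds_zero_nat (𝕜 := ℝ)
    have htctends : ∀ i : Fin p, Filter.Tendsto (tc i) Filter.atTop (nhds 1) := by
      intro i
      rcases eq_or_ne (b.2.2 (Fin.castLE hpn i)) 0 with hweq | hne
      · have hconst : tc i = fun _ => 1 := by
          funext m; simp only [htc, if_pos hweq]
        rw [hconst]; exact tendsto_const_nhds
      · have heq : tc i = fun m => ((1 - ε m) * b.2.2 (Fin.castLE hpn i)
            + ε m * δbar (Fin.castLE hpn i)) / b.2.2 (Fin.castLE hpn i) := by
          funext m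
          simp only [htc, if_neg hne]
          rw [hδmj]
        rw [heq]
        have h1 : Filter.Tendsto (fun m => (1 - ε m) * b.2.2 (Fin.castLE hpn i)
            + ε m * δbar (Fin.castLE hpn i)) Filter.atTop
            (nhds (b.2.2 (Fin.castLE hpn i))) := by
          have := (((tendsto_const_nhds (x := (1:ℝ))).sub hεtends).mul_const
            (b.2.2 (Fin.castLE hpn i))).add (hεtends.mul_const (δbar (Fin.castLE hpn i)))
          simpa using this
        have h2 := h1.div_const (b.2.2 (Fin.castLE hpn i))
        rwa [div_self hne] at h2
    have htends : Filter.Tendsto bm Filter.atTop (nhds b) := by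
      have hb' : b = (b.1, b.2.1, b.2.2) := rfl
      rw [hbm, hb']
      refine Filter.Tendsto.prodMk_nhds ?_ (Filter.Tendsto.prodMk_nhds ?_ ?_)
      · rw [tendsto_pi_nhds]
        intro i
        simpa only [one_smul] using (htctends i).smul_const (b.1 i)
      · rw [tendsto_pi_nhds]
        intro i
        simpa only [one_mul] using (htctends i).mul_const (b.2.1 i)
      · have := (((tendsto_const_nhds (x := (1:ℝ))).sub hεtends).smul_const b.2.2).add
          (hεtends.smul_const δbar)
        rw [hδm]
        simpa only [sub_zero, one_smul, zero_smul, add_zero] using this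
    exact mem_closure_of_tendsto htends (Filter.Eventually.of_forall hmem)
end

section
/- Let H = {(τ, x, z) ∈ ℝ × X × Z : Σ_{i∈[d]} h_i(x_i) ≤ τ and x_i(1 − z_i) = 0 for all i ∈ [d]}, where X = {x ∈ ℝ^d : x_i ≥ 0 for all i ∈ I} for some I ⊆ [d], Z ⊆ {0,1}^d, and each h_i : ℝ → ℝ ∪ {+∞} is proper, lower semicontinuous, convex with h_i(0) = 0. If for every i ∈ [d] there exists z ∈ Z with z_i = 1, then the closed convex hull of H equals {(τ, x, z) ∈ ℝ × X × conv(Z) : Σ_{i∈[d]} h_i^π(x_i, z_i) ≤ τ}. -/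
open scoped Classical
open Filter Topology Set

namespace SepAux

/-- Bundle of hypotheses on a one-dimensional function. -/
structure Good (h : ℝ → EReal) : Prop where
  hbot : ∀ x, h x ≠ ⊥
  hlsc : LowerSemicontinuous h
  hconv : Convex ℝ {u : ℝ × ℝ | h u.2 ≤ (u.1 : EReal)}
  h0 : h 0 = 0

variable {h : ℝ → EReal} {x w s t : ℝ}

lemma perspCl_pos (hw : 0 < w) : perspCl h x w = (w : EReal) * h (x / w) := if_pos hw

lemma perspCl_neg (hw : w < 0) : perspCl h x w = ⊤ := by
  rw [perspCl, if_neg (by linarith), if_neg (by linarith)]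

lemma perspCl_one : perspCl h x 1 = h x := by
  rw [perspCl_pos one_pos, div_one, EReal.coe_one, one_mul]

/-- Key monotonicity: for `0 < s ≤ t`, `t·h(x/t) ≤ s·h(x/s)`. -/
lemma g_anti (G : Good h) (hs : 0 < s) (hst : s ≤ t) :
    (t : EReal) * h (x / t) ≤ (s : EReal) * h (x / s) := by
  have ht : 0 < t := hs.trans_le hst
  by_cases htop : h (x / s) = ⊤
  · rw [htop, EReal.coe_mul_top_of_pos hs]; exact le_top
  obtain ⟨r, hr⟩ : ∃ r : ℝ, h (x / s) = r :=
    ⟨(h (x / s)).toReal, (EReal.coe_toReal htop (G.hbot _)).symm⟩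
  set a : ℝ := s / t with ha_def
  have ha0 : 0 < a := div_pos hs ht
  have ha1 : a ≤ 1 := (div_le_one ht).2 hst
  have hu1 : ((r, x / s) : ℝ × ℝ) ∈ {u : ℝ × ℝ | h u.2 ≤ (u.1 : EReal)} := by
    simp [hr]
  have hu2 : ((0, 0) : ℝ × ℝ) ∈ {u : ℝ × ℝ | h u.2 ≤ (u.1 : EReal)} := by
    simp [G.h0]
  have hmem := G.hconv (b := 1 - a) hu1 hu2 ha0.le (by linarith) (by ring)
  have hcombo : a • ((r, x / s) : ℝ × ℝ) + (1 - a) • ((0, 0) : ℝ × ℝ) = (a * r, x / t) := by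
    have : a * (x / s) = x / t := by
      rw [ha_def]
      field_simp
    simp [Prod.ext_iff, Prod.smul_def, this, smul_eq_mul]
  rw [hcombo] at hmem
  have h1 : h (x / t) ≤ ((a * r : ℝ) : EReal) := hmem
  calc (t : EReal) * h (x / t) ≤ (t : EReal) * ((a * r : ℝ) : EReal) :=
        mul_le_mul_of_nonneg_left h1 (by exact_mod_cast ht.le)
    _ = ((t * (a * r) : ℝ) : EReal) := by norm_cast
    _ = ((s * r : ℝ) : EReal) := by
        congr 1
        rw [ha_def]
        field_simp
    _ = (s : EReal) * h (x / s) := by rw [EReal.coe_mul, hr]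

lemma perspCl_zero_eq (G : Good h) :
    perspCl h x 0 = sSup ((fun s : ℝ => (s : EReal) * h (x / s)) '' Ioi 0) := by
  have hanti : AntitoneOn (fun s : ℝ => (s : EReal) * h (x / s)) (Ioi 0) := by
    intro a ha b hb hab
    exact g_anti G ha hab
  have := hanti.tendsto_nhdsGT (OrderTop.bddAbove _)
  rw [perspCl, if_neg (lt_irrefl _), if_pos rfl]
  exact this.limUnder_eq

lemma le_perspCl_zero (G : Good h) (hs : 0 < s) :
    (s : EReal) * h (x / s) ≤ perspCl h x 0 := by
  rw [perspCl_zero_eq G]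
  exact le_sSup ⟨s, hs, rfl⟩

lemma perspCl_zero_le (G : Good h) {b : EReal}
    (H : ∀ s : ℝ, 0 < s → (s : EReal) * h (x / s) ≤ b) : perspCl h x 0 ≤ b := by
  rw [perspCl_zero_eq G]
  exact sSup_le (by rintro _ ⟨s, hs, rfl⟩; exact H s hs)

/-- `perspCl` is antitone in `w` on `[0, ∞)`. -/
lemma perspCl_anti (G : Good h) (hw : 0 ≤ w) (hwt : w ≤ t) :
    perspCl h x t ≤ perspCl h x w := by
  rcases eq_or_lt_of_le hw with rfl | hw'
  · rcases eq_or_lt_of_le hwt with rfl | ht'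
    · exact le_rfl
    · rw [perspCl_pos ht']
      exact le_perspCl_zero G ht'
  · have ht' : 0 < t := hw'.trans_le hwt
    rw [perspCl_pos ht', perspCl_pos hw']
    exact g_anti G hw' hwt

lemma perspCl_ne_bot (G : Good h) : perspCl h x w ≠ ⊥ := by
  rcases lt_trichotomy 0 w with hw | hw | hw
  · rw [perspCl_pos hw]
    by_cases htop : h (x / w) = ⊤
    · rw [htop, EReal.coe_mul_top_of_pos hw]; exact top_ne_bot
    · obtain ⟨r, hr⟩ : ∃ r : ℝ, h (x / w) = r :=
        ⟨(h (x / w)).toReal, (EReal.coe_toReal htop (G.hbot _)).symm⟩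
      rw [hr, ← EReal.coe_mul]
      exact EReal.coe_ne_bot _
  · subst hw
    have h1 : (⊥ : EReal) < (1 : ℝ) * h (x / 1) := by
      rw [div_one, EReal.coe_one, one_mul]
      exact Ne.bot_lt (G.hbot x)
    exact ne_of_gt (h1.trans_le (le_perspCl_zero G one_pos))
  · rw [perspCl_neg hw]; exact top_ne_bot

lemma perspCl_zero_zero (G : Good h) : perspCl h (0:ℝ) 0 = 0 := by
  apply le_antisymm
  · apply perspCl_zero_le G
    intro s hs
    rw [zero_div, G.h0, mul_zero]
  · have := le_perspCl_zero (x := 0) G one_pos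
    rwa [zero_div, G.h0, mul_zero] at this

end SepAux

namespace SepAux2
open SepAux

variable {h : ℝ → EReal} {x w s t c : ℝ}

lemma ereal_mul_le_coe (hw : 0 ≤ w) {A : EReal} (H : A ≤ (c : EReal)) :
    (w : EReal) * A ≤ ((w * c : ℝ) : EReal) := by
  calc (w : EReal) * A ≤ (w : EReal) * (c : EReal) :=
        mul_le_mul_of_nonneg_left H (by exact_mod_cast hw)
    _ = ((w * c : ℝ) : EReal) := by norm_cast

lemma ereal_le_div (hw : 0 < w) {A : EReal} (hA : A ≠ ⊥)
    (H : (w : EReal) * A ≤ (c : EReal)) : A ≤ ((c / w : ℝ) : EReal) := by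
  rcases eq_or_ne A ⊤ with rfl | htop
  · rw [EReal.coe_mul_top_of_pos hw] at H
    exact absurd H (by simp)
  · obtain ⟨r, rfl⟩ : ∃ r : ℝ, A = r := ⟨A.toReal, (EReal.coe_toReal htop hA).symm⟩
    rw [← EReal.coe_mul, EReal.coe_le_coe_iff] at H
    exact_mod_cast (le_div_iff₀ hw).2 (by linarith [H])

lemma ereal_div_lt (hw : 0 < w) {A : EReal}
    (H : (c : EReal) < (w : EReal) * A) : ((c / w : ℝ) : EReal) < A := by
  by_contra hcon
  push_neg at hcon
  have := ereal_mul_le_coe hw.le hcon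
  rw [mul_div_cancel₀ _ hw.ne'] at this
  exact absurd (H.trans_le this) (lt_irrefl _)

/-- Core convexity inequality when both weights are positive. -/
lemma combo_pos (G : Good h) {θ x1 x2 w1 w2 a b : ℝ}
    (hθ0 : 0 ≤ θ) (hθ1 : θ ≤ 1) (hw1 : 0 < w1) (hw2 : 0 < w2)
    (ha : (w1 : EReal) * h (x1 / w1) ≤ (a : EReal))
    (hb : (w2 : EReal) * h (x2 / w2) ≤ (b : EReal)) :
    ((θ * w1 + (1 - θ) * w2 : ℝ) : EReal) *
        h ((θ * x1 + (1 - θ) * x2) / (θ * w1 + (1 - θ) * w2)) ≤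
      ((θ * a + (1 - θ) * b : ℝ) : EReal) := by
  set w : ℝ := θ * w1 + (1 - θ) * w2 with hw_def
  have hwpos : 0 < w := by
    rcases eq_or_lt_of_le hθ0 with rfl | hθ0'
    · simpa [hw_def] using hw2
    · have : 0 < θ * w1 := mul_pos hθ0' hw1
      nlinarith
  have h1 : h (x1 / w1) ≤ ((a / w1 : ℝ) : EReal) :=
    ereal_le_div hw1 (G.hbot _) ha
  have h2 : h (x2 / w2) ≤ ((b / w2 : ℝ) : EReal) :=
    ereal_le_div hw2 (G.hbot _) hb
  set μ : ℝ := θ * w1 / w with hμ_def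
  have hμ0 : 0 ≤ μ := by positivity
  have hμ'0 : 0 ≤ 1 - μ := by
    rw [hμ_def, sub_nonneg, div_le_one hwpos]
    nlinarith
  have hμsum : μ + (1 - μ) = 1 := by ring
  have hμ' : 1 - μ = (1 - θ) * w2 / w := by
    rw [hμ_def]
    field_simp
    rw [hw_def]
    ring
  have hmem := G.hconv (b := 1 - μ)
      (show ((a / w1, x1 / w1) : ℝ × ℝ) ∈ {u : ℝ × ℝ | h u.2 ≤ (u.1 : EReal)} from h1)
      (show ((b / w2, x2 / w2) : ℝ × ℝ) ∈ {u : ℝ × ℝ | h u.2 ≤ (u.1 : EReal)} from h2)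
      hμ0 hμ'0 hμsum
  have hcombo : μ • ((a / w1, x1 / w1) : ℝ × ℝ) + (1 - μ) • ((b / w2, x2 / w2) : ℝ × ℝ)
      = ((θ * a + (1 - θ) * b) / w, (θ * x1 + (1 - θ) * x2) / w) := by
    rw [Prod.ext_iff]
    constructor
    · show μ * (a / w1) + (1 - μ) * (b / w2) = _
      rw [hμ_def, hμ']
      field_simp
    · show μ * (x1 / w1) + (1 - μ) * (x2 / w2) = _
      rw [hμ_def, hμ']
      field_simp
  rw [hcombo] at hmem
  have hfin : h ((θ * x1 + (1 - θ) * x2) / w) ≤ (((θ * a + (1 - θ) * b) / w : ℝ) : EReal) := hmem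
  have := ereal_mul_le_coe hwpos.le hfin
  rwa [mul_div_cancel₀ _ hwpos.ne'] at this

end SepAux2

namespace SepAux2
open SepAux

variable {h : ℝ → EReal}

/-- Case `w1 > 0`, `w2 = 0` of the convexity inequality. -/
lemma combo_pos_zero (G : Good h) {θ x1 x2 w1 a b : ℝ}
    (hθ1 : θ ≤ 1) (hθpos : 0 < θ) (hw1 : 0 < w1)
    (ha : (w1 : EReal) * h (x1 / w1) ≤ (a : EReal))
    (hb : perspCl h x2 0 ≤ (b : EReal)) :
    ((θ * w1 : ℝ) : EReal) * h ((θ * x1 + (1 - θ) * x2) / (θ * w1)) ≤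
      ((θ * a + (1 - θ) * b : ℝ) : EReal) := by
  set X : ℝ := θ * x1 + (1 - θ) * x2 with hX_def
  set c : ℝ := θ * a + (1 - θ) * b with hc_def
  by_contra hcon
  push_neg at hcon
  have hwpos : 0 < θ * w1 := mul_pos hθpos hw1
  have hq0 : ((c / (θ * w1) : ℝ) : EReal) < h (X / (θ * w1)) := ereal_div_lt hwpos hcon
  obtain ⟨q, hq1, hq2⟩ := EReal.exists_between_coe_real hq0
  have hq1' : c / (θ * w1) < q := by exact_mod_cast hq1
  have hev1 : ∀ᶠ y in nhds (X / (θ * w1)), (q : EReal) < h y := G.hlsc _ _ hq2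
  have hwcont : Filter.Tendsto (fun s : ℝ => θ * w1 + (1 - θ) * s)
      (nhdsWithin 0 (Set.Ioi 0)) (nhds (θ * w1)) := by
    have : Filter.Tendsto (fun s : ℝ => θ * w1 + (1 - θ) * s) (nhds 0) (nhds (θ * w1 + (1 - θ) * 0)) :=
      (continuous_const.add (continuous_const.mul continuous_id)).tendsto 0
    simpa using this.mono_left nhdsWithin_le_nhds
  have hcont : Filter.Tendsto (fun s : ℝ => X / (θ * w1 + (1 - θ) * s))
      (nhdsWithin 0 (Set.Ioi 0)) (nhds (X / (θ * w1))) :=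
    Filter.Tendsto.div tendsto_const_nhds hwcont hwpos.ne'
  have hcont2 : Filter.Tendsto (fun s : ℝ => c / (θ * w1 + (1 - θ) * s))
      (nhdsWithin 0 (Set.Ioi 0)) (nhds (c / (θ * w1))) :=
    Filter.Tendsto.div tendsto_const_nhds hwcont hwpos.ne'
  have hev2 : ∀ᶠ s in nhdsWithin (0:ℝ) (Set.Ioi 0),
      (q : EReal) < h (X / (θ * w1 + (1 - θ) * s)) := hcont.eventually hev1
  have hev3 : ∀ᶠ s in nhdsWithin (0:ℝ) (Set.Ioi 0),
      c / (θ * w1 + (1 - θ) * s) < q := hcont2.eventually (eventually_lt_nhds hq1')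
  have hev4 : ∀ᶠ s in nhdsWithin (0:ℝ) (Set.Ioi 0), 0 < s :=
    eventually_mem_nhdsWithin
  obtain ⟨s, hs1, hs2, hs3⟩ := (hev2.and (hev3.and hev4)).exists
  have hgb : (s : EReal) * h (x2 / s) ≤ (b : EReal) := (le_perspCl_zero G hs3).trans hb
  have hcore := combo_pos G hθpos.le hθ1 hw1 hs3 ha hgb
  have hwspos : 0 < θ * w1 + (1 - θ) * s := by nlinarith
  have hle := ereal_le_div hwspos (G.hbot _) hcore
  have h5 : (q : EReal) < (((θ * a + (1 - θ) * b) / (θ * w1 + (1 - θ) * s) : ℝ) : EReal) :=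
    hs1.trans_le hle
  have h6 : q < (θ * a + (1 - θ) * b) / (θ * w1 + (1 - θ) * s) := by exact_mod_cast h5
  rw [← hc_def] at h6
  linarith

/-- The master convexity inequality for `perspCl` with real upper bounds. -/
lemma perspCl_combo (G : Good h) {θ x1 x2 w1 w2 a b : ℝ}
    (hθ0 : 0 ≤ θ) (hθ1 : θ ≤ 1) (hw1 : 0 ≤ w1) (hw2 : 0 ≤ w2)
    (ha : perspCl h x1 w1 ≤ (a : EReal)) (hb : perspCl h x2 w2 ≤ (b : EReal)) :
    perspCl h (θ * x1 + (1 - θ) * x2) (θ * w1 + (1 - θ) * w2) ≤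
      ((θ * a + (1 - θ) * b : ℝ) : EReal) := by
  rcases eq_or_lt_of_le hθ0 with rfl | hθpos
  · have e1 : (0:ℝ) * x1 + (1 - 0) * x2 = x2 := by ring
    have e2 : (0:ℝ) * w1 + (1 - 0) * w2 = w2 := by ring
    have e3 : (0:ℝ) * a + (1 - 0) * b = b := by ring
    rw [e1, e2, e3]; exact hb
  rcases eq_or_lt_of_le hθ1 with rfl | hθ1'
  · have e1 : (1:ℝ) * x1 + (1 - 1) * x2 = x1 := by ring
    have e2 : (1:ℝ) * w1 + (1 - 1) * w2 = w1 := by ring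
    have e3 : (1:ℝ) * a + (1 - 1) * b = a := by ring
    rw [e1, e2, e3]; exact ha
  have hθ'pos : 0 < 1 - θ := by linarith
  rcases eq_or_lt_of_le hw1 with rfl | hw1'
  · rcases eq_or_lt_of_le hw2 with rfl | hw2'
    · -- both zero
      have e2 : θ * (0:ℝ) + (1 - θ) * 0 = 0 := by ring
      rw [e2]
      apply perspCl_zero_le G
      intro s hs
      have ha' : (s : EReal) * h (x1 / s) ≤ (a : EReal) := (le_perspCl_zero G hs).trans ha
      have hb' : (s : EReal) * h (x2 / s) ≤ (b : EReal) := (le_perspCl_zero G hs).trans hb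
      have := combo_pos G hθpos.le hθ1 hs hs ha' hb'
      have e3 : θ * s + (1 - θ) * s = s := by ring
      rwa [e3] at this
    · -- w1 = 0, w2 > 0: use symmetry
      rw [perspCl_pos hw2'] at hb
      have := combo_pos_zero G (θ := 1 - θ) (by linarith) hθ'pos hw2' hb ha
      have e1 : (1 - θ) * x2 + (1 - (1 - θ)) * x1 = θ * x1 + (1 - θ) * x2 := by ring
      have e2 : (1 - θ) * w2 = θ * 0 + (1 - θ) * w2 := by ring
      have e3 : (1 - θ) * b + (1 - (1 - θ)) * a = θ * a + (1 - θ) * b := by ring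
      rw [e1, e3] at this
      rw [← e2]
      rwa [perspCl_pos (by nlinarith : (0:ℝ) < (1 - θ) * w2)]
  · rcases eq_or_lt_of_le hw2 with rfl | hw2'
    · -- w1 > 0, w2 = 0
      rw [perspCl_pos hw1'] at ha
      have := combo_pos_zero G hθ1 hθpos hw1' ha hb
      have e2 : θ * w1 = θ * w1 + (1 - θ) * 0 := by ring
      rw [← e2]
      rwa [perspCl_pos (by positivity : (0:ℝ) < θ * w1)]
    · -- both positive
      have hwpos : 0 < θ * w1 + (1 - θ) * w2 := by positivity
      rw [perspCl_pos hw1'] at ha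
      rw [perspCl_pos hw2'] at hb
      rw [perspCl_pos hwpos]
      exact combo_pos G hθpos.le hθ1 hw1' hw2' ha hb

end SepAux2

namespace SepAux2
open SepAux Filter Topology

variable {h : ℝ → EReal}

/-- `perspCl` is jointly lower semicontinuous. -/
lemma perspCl_lsc (G : Good h) :
    LowerSemicontinuous (fun u : ℝ × ℝ => perspCl h u.1 u.2) := by
  intro p y hy
  simp only at hy ⊢
  rcases lt_trichotomy p.2 0 with hw | hw | hw
  · have hev : ∀ᶠ q : ℝ × ℝ in 𝓝 p, q.2 < 0 :=
      (continuous_snd.tendsto p).eventually (eventually_lt_nhds hw)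
    filter_upwards [hev] with q hq
    rw [perspCl_neg hq]
    exact lt_of_lt_of_le hy le_top
  · -- p.2 = 0
    have hy0 : y < perspCl h p.1 0 := by rwa [hw] at hy
    rw [perspCl_zero_eq G] at hy0
    obtain ⟨_, ⟨s, hs, rfl⟩, hys⟩ := lt_sSup_iff.1 hy0
    replace hs : (0:ℝ) < s := hs
    obtain ⟨q, hq1, hq2⟩ := EReal.exists_between_coe_real hys
    have hq3 : ((q / s : ℝ) : EReal) < h (p.1 / s) := ereal_div_lt hs hq2
    obtain ⟨q', hq'1, hq'2⟩ := EReal.exists_between_coe_real hq3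
    have hq'1' : q / s < q' := by exact_mod_cast hq'1
    have hev1 : ∀ᶠ u in 𝓝 (p.1 / s), (q' : EReal) < h u := G.hlsc _ _ hq'2
    have hcont : Tendsto (fun u : ℝ × ℝ => u.1 / s) (𝓝 p) (𝓝 (p.1 / s)) :=
      ((continuous_fst.div_const s).tendsto p)
    have hev2 : ∀ᶠ u : ℝ × ℝ in 𝓝 p, (q' : EReal) < h (u.1 / s) := hcont.eventually hev1
    have hev3 : ∀ᶠ u : ℝ × ℝ in 𝓝 p, u.2 < s :=
      (continuous_snd.tendsto p).eventually (eventually_lt_nhds (by rw [hw]; exact hs))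
    filter_upwards [hev2, hev3] with u hu1 hu2
    have hmul : ((s * q' : ℝ) : EReal) ≤ (s : EReal) * h (u.1 / s) := by
      calc ((s * q' : ℝ) : EReal) = (s : EReal) * (q' : EReal) := by norm_cast
        _ ≤ (s : EReal) * h (u.1 / s) :=
            mul_le_mul_of_nonneg_left hu1.le (by exact_mod_cast hs.le)
    have key : ((s * q' : ℝ) : EReal) ≤ perspCl h u.1 u.2 := by
      rcases lt_trichotomy u.2 0 with h2 | h2 | h2
      · rw [perspCl_neg h2]; exact le_top
      · rw [h2]
        exact hmul.trans (le_perspCl_zero G hs)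
      · have hle : perspCl h u.1 s ≤ perspCl h u.1 u.2 := perspCl_anti G h2.le hu2.le
        rw [perspCl_pos hs] at hle
        exact hmul.trans hle
    have hqq : (q : EReal) < ((s * q' : ℝ) : EReal) := by
      have h5 : q < q' * s := (div_lt_iff₀ hs).1 hq'1'
      exact_mod_cast (by linarith : q < s * q')
    exact lt_of_lt_of_le (hq1.trans hqq) key
  · -- 0 < p.2
    have hy0 : y < (p.2 : EReal) * h (p.1 / p.2) := by rwa [perspCl_pos hw] at hy
    obtain ⟨q, hq1, hq2⟩ := EReal.exists_between_coe_real hy0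
    have hq3 : ((q / p.2 : ℝ) : EReal) < h (p.1 / p.2) := ereal_div_lt hw hq2
    obtain ⟨q', hq'1, hq'2⟩ := EReal.exists_between_coe_real hq3
    have hq'1' : q / p.2 < q' := by exact_mod_cast hq'1
    have hev1 : ∀ᶠ u in 𝓝 (p.1 / p.2), (q' : EReal) < h u := G.hlsc _ _ hq'2
    have hcont : Tendsto (fun u : ℝ × ℝ => u.1 / u.2) (𝓝 p) (𝓝 (p.1 / p.2)) :=
      ((continuous_fst.tendsto p).div (continuous_snd.tendsto p) hw.ne')
    have hev2 : ∀ᶠ u : ℝ × ℝ in 𝓝 p, (q' : EReal) < h (u.1 / u.2) := hcont.eventually hev1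
    have hq4 : q < p.2 * q' := by
      have := (div_lt_iff₀ hw).1 hq'1'
      linarith
    have hcont2 : Tendsto (fun u : ℝ × ℝ => u.2 * q') (𝓝 p) (𝓝 (p.2 * q')) :=
      ((continuous_snd.mul continuous_const).tendsto p)
    have hev3 : ∀ᶠ u : ℝ × ℝ in 𝓝 p, q < u.2 * q' := hcont2.eventually (eventually_gt_nhds hq4)
    have hev4 : ∀ᶠ u : ℝ × ℝ in 𝓝 p, 0 < u.2 :=
      (continuous_snd.tendsto p).eventually (eventually_gt_nhds hw)
    filter_upwards [hev2, hev3, hev4] with u hu1 hu2 hu3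
    rw [perspCl_pos hu3]
    have hmul : ((u.2 * q' : ℝ) : EReal) ≤ (u.2 : EReal) * h (u.1 / u.2) := by
      calc ((u.2 * q' : ℝ) : EReal) = (u.2 : EReal) * (q' : EReal) := by norm_cast
        _ ≤ (u.2 : EReal) * h (u.1 / u.2) :=
            mul_le_mul_of_nonneg_left hu1.le (by exact_mod_cast hu3.le)
    exact lt_of_lt_of_le (hq1.trans (by exact_mod_cast hu2)) hmul

/-- A finite sum of `EReal`s, none of which is `⊥`, is not `⊥`. -/
lemma sum_ne_bot {ι : Type*} (t : Finset ι) (f : ι → EReal)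
    (hb : ∀ i ∈ t, f i ≠ ⊥) : ∑ i ∈ t, f i ≠ ⊥ := by
  classical
  induction t using Finset.induction_on with
  | empty => simp
  | @insert i t hi IH =>
    rw [Finset.sum_insert hi, Ne, EReal.add_eq_bot_iff]
    push_neg
    exact ⟨hb i (Finset.mem_insert_self i t),
      IH (fun j hj => hb j (Finset.mem_insert_of_mem hj))⟩

/-- A finite sum of lower semicontinuous `EReal`-valued functions avoiding `⊥`
is lower semicontinuous. -/
lemma lsc_sum {α : Type*} [TopologicalSpace α] {ι : Type*} (t : Finset ι)
    (f : ι → α → EReal) (hf : ∀ i ∈ t, LowerSemicontinuous (f i))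
    (hb : ∀ i ∈ t, ∀ x, f i x ≠ ⊥) :
    LowerSemicontinuous (fun x => ∑ i ∈ t, f i x) := by
  classical
  induction t using Finset.induction_on with
  | empty => simpa using lowerSemicontinuous_const
  | @insert i t hi IH =>
    have h1 : LowerSemicontinuous (f i) := hf i (Finset.mem_insert_self i t)
    have h2 : LowerSemicontinuous (fun x => ∑ j ∈ t, f j x) :=
      IH (fun j hj => hf j (Finset.mem_insert_of_mem hj))
        (fun j hj => hb j (Finset.mem_insert_of_mem hj))
    have h3 : LowerSemicontinuous (fun x => f i x + ∑ j ∈ t, f j x) := by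
      apply h1.add' h2
      intro x
      apply EReal.continuousAt_add
      · exact Or.inr (sum_ne_bot t (fun j => f j x)
          (fun j hj => hb j (Finset.mem_insert_of_mem hj) x))
      · exact Or.inl (hb i (Finset.mem_insert_self i t) x)
    simpa only [Finset.sum_insert hi] using h3

end SepAux2

namespace SepAux2
open SepAux Filter Topology

lemma coe_sum {ι : Type*} (t : Finset ι) (f : ι → ℝ) :
    ((∑ i ∈ t, f i : ℝ) : EReal) = ∑ i ∈ t, (f i : EReal) := by
  classical
  induction t using Finset.induction_on with
  | empty => simp
  | @insert i t hi IH => rw [Finset.sum_insert hi, Finset.sum_insert hi, EReal.coe_add, IH]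

/-- If a finite `EReal` sum with no `⊥` term is `≤` a real number, every term is `≠ ⊤`. -/
lemma term_ne_top {ι : Type*} {t : Finset ι} {f : ι → EReal} {c : ℝ}
    (hb : ∀ i ∈ t, f i ≠ ⊥) (hle : ∑ i ∈ t, f i ≤ (c : EReal)) :
    ∀ i ∈ t, f i ≠ ⊤ := by
  classical
  intro i hi htop
  have h1 : ∑ j ∈ t, f j = ⊤ := by
    rw [← Finset.add_sum_erase t f hi, htop]
    exact EReal.top_add_of_ne_bot
      (sum_ne_bot _ _ (fun j hj => hb j (Finset.mem_erase.1 hj).2))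
  rw [h1] at hle
  exact absurd hle (by simp)

/-- Extract real values from a finite `EReal` sum bounded above by a real number. -/
lemma terms_real {ι : Type*} {t : Finset ι} {f : ι → EReal} {c : ℝ}
    (hb : ∀ i ∈ t, f i ≠ ⊥) (hle : ∑ i ∈ t, f i ≤ (c : EReal)) :
    ∀ i ∈ t, f i = ((f i).toReal : EReal) := by
  intro i hi
  exact (EReal.coe_toReal (term_ne_top hb hle i hi) (hb i hi)).symm

/-- Real-valued comparison for such sums. -/
lemma sum_toReal_le {ι : Type*} {t : Finset ι} {f : ι → EReal} {c : ℝ}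
    (hb : ∀ i ∈ t, f i ≠ ⊥) (hle : ∑ i ∈ t, f i ≤ (c : EReal)) :
    ∑ i ∈ t, (f i).toReal ≤ c := by
  have h1 : ∑ i ∈ t, f i = ((∑ i ∈ t, (f i).toReal : ℝ) : EReal) := by
    rw [coe_sum]
    exact Finset.sum_congr rfl (terms_real hb hle)
  rw [h1] at hle
  exact_mod_cast hle

end SepAux2

namespace SepAux2
open SepAux Filter Topology

variable {d : ℕ} (I : Set (Fin d)) (Z : Set (Fin d → ℝ)) (h : Fin d → ℝ → EReal)

/-- The separable mixed-integer set `H`. -/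
def Sset : Set (ℝ × (Fin d → ℝ) × (Fin d → ℝ)) :=
  {p | (∀ i ∈ I, 0 ≤ p.2.1 i) ∧ p.2.2 ∈ Z ∧
      (∑ i, h i (p.2.1 i)) ≤ (p.1 : EReal) ∧ ∀ i, p.2.1 i * (1 - p.2.2 i) = 0}

/-- The claimed closed convex hull. -/
def Rset : Set (ℝ × (Fin d → ℝ) × (Fin d → ℝ)) :=
  {p | (∀ i ∈ I, 0 ≤ p.2.1 i) ∧ p.2.2 ∈ convexHull ℝ Z ∧
      (∑ i, perspCl (h i) (p.2.1 i) (p.2.2 i)) ≤ (p.1 : EReal)}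

variable {I Z h}

lemma convexHull_box (hZ01 : ∀ z ∈ Z, ∀ i, z i = 0 ∨ z i = 1) :
    convexHull ℝ Z ⊆ {z : Fin d → ℝ | ∀ i, 0 ≤ z i ∧ z i ≤ 1} := by
  apply convexHull_min
  · intro z hz i
    rcases hZ01 z hz i with h0 | h1
    · simp [h0]
    · simp [h1]
  · intro z1 h1 z2 h2 a b ha hb hab i
    obtain ⟨h1a, h1b⟩ := h1 i
    obtain ⟨h2a, h2b⟩ := h2 i
    constructor
    · show 0 ≤ (a • z1 + b • z2) i
      simp only [Pi.add_apply, Pi.smul_apply, smul_eq_mul]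
      nlinarith
    · show (a • z1 + b • z2) i ≤ 1
      simp only [Pi.add_apply, Pi.smul_apply, smul_eq_mul]
      nlinarith

lemma S_subset_R (G : ∀ i, Good (h i)) (hZ01 : ∀ z ∈ Z, ∀ i, z i = 0 ∨ z i = 1) :
    Sset I Z h ⊆ Rset I Z h := by
  rintro ⟨τ, x, z⟩ ⟨hx, hzZ, hsum, hcomp⟩
  refine ⟨hx, subset_convexHull ℝ Z hzZ, ?_⟩
  have key : ∀ i, perspCl (h i) (x i) (z i) = h i (x i) := by
    intro i
    rcases hZ01 z hzZ i with h0i | h1i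
    · have hx0 : x i = 0 := by
        have h5 : x i * (1 - z i) = 0 := hcomp i
        rw [h0i] at h5; simpa using h5
      rw [h0i, hx0, perspCl_zero_zero (G i), (G i).h0]
    · rw [h1i, perspCl_one]
  calc (∑ i, perspCl (h i) (x i) (z i)) = ∑ i, h i (x i) :=
        Finset.sum_congr rfl (fun i _ => key i)
    _ ≤ (τ : EReal) := hsum

lemma R_convex (G : ∀ i, Good (h i)) (hZ01 : ∀ z ∈ Z, ∀ i, z i = 0 ∨ z i = 1) :
    Convex ℝ (Rset I Z h) := by
  rintro ⟨τp, xp, zp⟩ ⟨hpX, hpZ, hpS⟩ ⟨τq, xq, zq⟩ ⟨hqX, hqZ, hqS⟩ θ θ' hθ0 hθ'0 h1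
  obtain rfl : θ' = 1 - θ := by linarith
  have hθ1 : θ ≤ 1 := by linarith
  have hbp : ∀ i ∈ (Finset.univ : Finset (Fin d)),
      perspCl (h i) (xp i) (zp i) ≠ ⊥ := fun i _ => perspCl_ne_bot (G i)
  have hbq : ∀ i ∈ (Finset.univ : Finset (Fin d)),
      perspCl (h i) (xq i) (zq i) ≠ ⊥ := fun i _ => perspCl_ne_bot (G i)
  set a : Fin d → ℝ := fun i => (perspCl (h i) (xp i) (zp i)).toReal with ha_def
  set b : Fin d → ℝ := fun i => (perspCl (h i) (xq i) (zq i)).toReal with hb_def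
  have hap : ∀ i, perspCl (h i) (xp i) (zp i) = ((a i : ℝ) : EReal) :=
    fun i => terms_real hbp hpS i (Finset.mem_univ i)
  have haq : ∀ i, perspCl (h i) (xq i) (zq i) = ((b i : ℝ) : EReal) :=
    fun i => terms_real hbq hqS i (Finset.mem_univ i)
  have hsa : ∑ i, a i ≤ τp := sum_toReal_le hbp hpS
  have hsb : ∑ i, b i ≤ τq := sum_toReal_le hbq hqS
  have hzp0 : ∀ i, 0 ≤ zp i := fun i => ((convexHull_box hZ01) hpZ i).1
  have hzq0 : ∀ i, 0 ≤ zq i := fun i => ((convexHull_box hZ01) hqZ i).1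
  refine ⟨?_, ?_, ?_⟩
  · intro i hi
    have h2 := hpX i hi
    have h3 := hqX i hi
    show 0 ≤ (θ • (τp, xp, zp) + (1 - θ) • (τq, xq, zq)).2.1 i
    simp only [Prod.smul_mk, Prod.mk_add_mk, Pi.add_apply, Pi.smul_apply, smul_eq_mul]
    nlinarith
  · show (θ • (τp, xp, zp) + (1 - θ) • (τq, xq, zq)).2.2 ∈ convexHull ℝ Z
    simp only [Prod.smul_mk, Prod.mk_add_mk]
    exact (convex_convexHull ℝ Z) hpZ hqZ hθ0 hθ'0 h1
  · show (∑ i, perspCl (h i) ((θ • (τp, xp, zp) + (1 - θ) • (τq, xq, zq)).2.1 i)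
        ((θ • (τp, xp, zp) + (1 - θ) • (τq, xq, zq)).2.2 i))
        ≤ (((θ • (τp, xp, zp) + (1 - θ) • (τq, xq, zq)).1 : ℝ) : EReal)
    simp only [Prod.smul_mk, Prod.mk_add_mk, Pi.add_apply, Pi.smul_apply, smul_eq_mul]
    have hterm : ∀ i ∈ (Finset.univ : Finset (Fin d)),
        perspCl (h i) (θ * xp i + (1 - θ) * xq i) (θ * zp i + (1 - θ) * zq i)
          ≤ ((θ * a i + (1 - θ) * b i : ℝ) : EReal) := by
      intro i _
      exact perspCl_combo (G i) hθ0 hθ1 (hzp0 i) (hzq0 i) (le_of_eq (hap i)) (le_of_eq (haq i))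
    calc (∑ i, perspCl (h i) (θ * xp i + (1 - θ) * xq i) (θ * zp i + (1 - θ) * zq i))
        ≤ ∑ i, ((θ * a i + (1 - θ) * b i : ℝ) : EReal) := Finset.sum_le_sum hterm
      _ = ((∑ i, (θ * a i + (1 - θ) * b i) : ℝ) : EReal) := (coe_sum _ _).symm
      _ ≤ ((θ * τp + (1 - θ) * τq : ℝ) : EReal) := by
          rw [EReal.coe_le_coe_iff]
          rw [Finset.sum_add_distrib, ← Finset.mul_sum, ← Finset.mul_sum]
          have := mul_le_mul_of_nonneg_left hsa hθ0
          have := mul_le_mul_of_nonneg_left hsb hθ'0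
          linarith

lemma R_closed (G : ∀ i, Good (h i)) (hZ01 : ∀ z ∈ Z, ∀ i, z i = 0 ∨ z i = 1) :
    IsClosed (Rset I Z h) := by
  have hZfin : Z.Finite := by
    apply Set.Finite.subset
      (Set.Finite.pi (fun _ : Fin d => (Set.finite_singleton (1:ℝ)).insert 0))
    intro z hz
    intro i _
    rcases hZ01 z hz i with h0 | h1
    · simp [h0]
    · simp [h1]
  have h1 : IsClosed {p : ℝ × (Fin d → ℝ) × (Fin d → ℝ) | ∀ i ∈ I, 0 ≤ p.2.1 i} := by
    have : {p : ℝ × (Fin d → ℝ) × (Fin d → ℝ) | ∀ i ∈ I, 0 ≤ p.2.1 i}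
        = ⋂ i ∈ I, {p : ℝ × (Fin d → ℝ) × (Fin d → ℝ) | 0 ≤ p.2.1 i} := by
      ext p; simp
    rw [this]
    refine isClosed_biInter (fun i _ => ?_)
    exact isClosed_le continuous_const ((continuous_apply i).comp (continuous_fst.comp continuous_snd))
  have h2 : IsClosed {p : ℝ × (Fin d → ℝ) × (Fin d → ℝ) | p.2.2 ∈ convexHull ℝ Z} :=
    ((hZfin.isCompact_convexHull (𝕜 := ℝ)).isClosed).preimage (continuous_snd.comp continuous_snd)
  have hF : LowerSemicontinuous
      (fun p : ℝ × (Fin d → ℝ) × (Fin d → ℝ) => ∑ i, perspCl (h i) (p.2.1 i) (p.2.2 i)) := by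
    apply lsc_sum
    · intro i _
      have hc : Continuous (fun p : ℝ × (Fin d → ℝ) × (Fin d → ℝ) => (p.2.1 i, p.2.2 i)) :=
        ((continuous_apply i).comp (continuous_fst.comp continuous_snd)).prodMk
          ((continuous_apply i).comp (continuous_snd.comp continuous_snd))
      exact (perspCl_lsc (G i)).comp hc
    · intro i _ p
      exact perspCl_ne_bot (G i)
  have h3 : IsClosed {p : ℝ × (Fin d → ℝ) × (Fin d → ℝ) |
      (∑ i, perspCl (h i) (p.2.1 i) (p.2.2 i)) ≤ (p.1 : EReal)} := by
    rw [← isOpen_compl_iff]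
    rw [isOpen_iff_mem_nhds]
    intro p hp
    simp only [Set.mem_compl_iff, Set.mem_setOf_eq, not_le] at hp
    obtain ⟨m, hm1, hm2⟩ := EReal.exists_between_coe_real hp
    have hm1' : p.1 < m := by exact_mod_cast hm1
    have hev1 : ∀ᶠ q : ℝ × (Fin d → ℝ) × (Fin d → ℝ) in nhds p,
        (m : EReal) < ∑ i, perspCl (h i) (q.2.1 i) (q.2.2 i) := hF p _ hm2
    have hev2 : ∀ᶠ q : ℝ × (Fin d → ℝ) × (Fin d → ℝ) in nhds p, q.1 < m :=
      (continuous_fst.tendsto p).eventually (eventually_lt_nhds hm1')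
    filter_upwards [hev1, hev2] with q hq1 hq2
    simp only [Set.mem_compl_iff, Set.mem_setOf_eq, not_le]
    exact lt_trans (by exact_mod_cast hq2) hq1
  have : Rset I Z h = _ ∩ (_ ∩ _) := rfl
  exact h1.inter (h2.inter h3)

end SepAux2

namespace SepAux2
open SepAux Filter Topology

variable {d : ℕ} {I : Set (Fin d)} {Z : Set (Fin d → ℝ)} {h : Fin d → ℝ → EReal}

lemma core_mem (G : ∀ i, Good (h i)) (hZ01 : ∀ z ∈ Z, ∀ i, z i = 0 ∨ z i = 1)
    {τ : ℝ} {x z : Fin d → ℝ}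
    (hz : z ∈ convexHull ℝ Z) (hzpos : ∀ i, 0 < z i) (hx : ∀ i ∈ I, 0 ≤ x i)
    (hsum : (∑ i, (z i : EReal) * h i (x i / z i)) ≤ (τ : EReal)) :
    (τ, x, z) ∈ convexHull ℝ (Sset I Z h) := by
  classical
  have hb : ∀ i ∈ (Finset.univ : Finset (Fin d)),
      (z i : EReal) * h i (x i / z i) ≠ ⊥ := by
    intro i _
    rcases eq_or_ne (h i (x i / z i)) ⊤ with he | he
    · rw [he, EReal.coe_mul_top_of_pos (hzpos i)]; simp
    · obtain ⟨r, hrr⟩ : ∃ r : ℝ, h i (x i / z i) = r :=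
        ⟨(h i (x i / z i)).toReal, (EReal.coe_toReal he ((G i).hbot _)).symm⟩
      rw [hrr, ← EReal.coe_mul]
      exact EReal.coe_ne_bot _
  have hhtop : ∀ i, h i (x i / z i) ≠ ⊤ := by
    intro i he
    have h5 := term_ne_top hb hsum i (Finset.mem_univ i)
    rw [he, EReal.coe_mul_top_of_pos (hzpos i)] at h5
    exact h5 rfl
  set r : Fin d → ℝ := fun i => (h i (x i / z i)).toReal with hr_def
  have hr : ∀ i, h i (x i / z i) = ((r i : ℝ) : EReal) :=
    fun i => (EReal.coe_toReal (hhtop i) ((G i).hbot _)).symm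
  have hsum' : ∑ i, z i * r i ≤ τ := by
    have h5 : ∀ i ∈ (Finset.univ : Finset (Fin d)),
        (z i : EReal) * h i (x i / z i) = ((z i * r i : ℝ) : EReal) := by
      intro i _; rw [hr i, ← EReal.coe_mul]
    rw [Finset.sum_congr rfl h5, ← coe_sum] at hsum
    exact_mod_cast hsum
  rw [convexHull_eq] at hz
  obtain ⟨ι, t, wgt, ζ, hw0, hw1, hζZ, hcm⟩ := hz
  rw [Finset.centerMass_eq_of_sum_1 _ _ hw1] at hcm
  have hz_eq : ∀ i, z i = ∑ k ∈ t, wgt k * ζ k i := by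
    intro i
    calc z i = (∑ k ∈ t, wgt k • ζ k) i := by rw [hcm]
      _ = ∑ k ∈ t, wgt k * ζ k i := by
          rw [Finset.sum_apply]
          exact Finset.sum_congr rfl (fun k _ => by simp [smul_eq_mul])
  have hfilt : ∀ i, (∑ k ∈ t, if ζ k i = 1 then wgt k else 0) = z i := by
    intro i
    rw [hz_eq i]
    apply Finset.sum_congr rfl
    intro k hk
    rcases hZ01 (ζ k) (hζZ k hk) i with h0 | h1
    · rw [if_neg (by rw [h0]; norm_num), h0, mul_zero]
    · rw [if_pos h1, h1, mul_one]
  set δ : ℝ := τ - ∑ i, z i * r i with hδ_def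
  have hδ0 : 0 ≤ δ := by rw [hδ_def]; linarith
  set X : ι → (Fin d → ℝ) := fun k i => if ζ k i = 1 then x i / z i else 0 with hX_def
  set T : ι → ℝ := fun k => (∑ i, if ζ k i = 1 then r i else 0) + δ with hT_def
  set Q : ι → ℝ × (Fin d → ℝ) × (Fin d → ℝ) := fun k => (T k, X k, ζ k) with hQ_def
  have hQS : ∀ k ∈ t, Q k ∈ Sset I Z h := by
    intro k hk
    refine ⟨?_, hζZ k hk, ?_, ?_⟩
    · intro i hi
      show (0:ℝ) ≤ (if ζ k i = 1 then x i / z i else 0)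
      split
      · exact div_nonneg (hx i hi) (hzpos i).le
      · exact le_rfl
    · show (∑ i, h i (X k i)) ≤ ((T k : ℝ) : EReal)
      have h5 : ∀ i ∈ (Finset.univ : Finset (Fin d)),
          h i (X k i) = (((if ζ k i = 1 then r i else 0) : ℝ) : EReal) := by
        intro i _
        by_cases hki : ζ k i = 1
        · rw [if_pos hki]
          have : X k i = x i / z i := by rw [hX_def]; simp [hki]
          rw [this, hr i]
        · rw [if_neg hki]
          have : X k i = 0 := by rw [hX_def]; simp [hki]
          rw [this, (G i).h0, EReal.coe_zero]
      rw [Finset.sum_congr rfl h5, ← coe_sum, EReal.coe_le_coe_iff]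
      simp only [hT_def]
      linarith
    · intro i
      show (if ζ k i = 1 then x i / z i else 0) * (1 - ζ k i) = 0
      by_cases hki : ζ k i = 1
      · rw [hki]; ring
      · rw [if_neg hki, zero_mul]
  have hsum_smul : ∑ k ∈ t, wgt k • Q k = (τ, x, z) := by
    have efst : (∑ k ∈ t, wgt k • Q k).1 = ∑ k ∈ t, wgt k * T k := by
      rw [Prod.fst_sum]
      exact Finset.sum_congr rfl (fun k _ => by simp [hQ_def, smul_eq_mul])
    have esnd1 : (∑ k ∈ t, wgt k • Q k).2.1 = ∑ k ∈ t, wgt k • X k := by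
      rw [Prod.snd_sum, Prod.fst_sum]
      exact Finset.sum_congr rfl (fun k _ => by simp [hQ_def])
    have esnd2 : (∑ k ∈ t, wgt k • Q k).2.2 = ∑ k ∈ t, wgt k • ζ k := by
      rw [Prod.snd_sum, Prod.snd_sum]
      exact Finset.sum_congr rfl (fun k _ => by simp [hQ_def])
    rw [Prod.ext_iff, Prod.ext_iff]
    refine ⟨?_, ?_, ?_⟩
    · rw [efst]
      show ∑ k ∈ t, wgt k * T k = τ
      have h6 : ∀ k ∈ t, wgt k * T k
          = (∑ i, (if ζ k i = 1 then wgt k else 0) * r i) + wgt k * δ := by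
        intro k _
        rw [hT_def]
        simp only [mul_add]
        congr 1
        rw [Finset.mul_sum]
        apply Finset.sum_congr rfl
        intro i _
        by_cases hki : ζ k i = 1 <;> simp [hki]
      rw [Finset.sum_congr rfl h6, Finset.sum_add_distrib, ← Finset.sum_mul, hw1, one_mul]
      rw [Finset.sum_comm]
      have h7 : ∀ i ∈ (Finset.univ : Finset (Fin d)),
          (∑ k ∈ t, (if ζ k i = 1 then wgt k else 0) * r i) = z i * r i := by
        intro i _
        rw [← Finset.sum_mul, hfilt i]
      rw [Finset.sum_congr rfl h7, hδ_def]
      ring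
    · rw [esnd1]
      funext i
      rw [Finset.sum_apply]
      have h6 : ∀ k ∈ t, (wgt k • X k) i
          = (if ζ k i = 1 then wgt k else 0) * (x i / z i) := by
        intro k _
        simp only [Pi.smul_apply, smul_eq_mul, hX_def]
        by_cases hki : ζ k i = 1 <;> simp [hki]
      rw [Finset.sum_congr rfl h6, ← Finset.sum_mul, hfilt i]
      rw [mul_div_assoc', mul_comm, mul_div_assoc, div_self (hzpos i).ne', mul_one]
    · rw [esnd2]
      exact hcm
  have := Finset.centerMass_mem_convexHull t hw0 (hw1 ▸ one_pos) hQS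
  rwa [Finset.centerMass_eq_of_sum_1 _ _ hw1, hsum_smul] at this

end SepAux2

namespace SepAux2
open SepAux Filter Topology

variable {d : ℕ} {I : Set (Fin d)} {Z : Set (Fin d → ℝ)} {h : Fin d → ℝ → EReal}

lemma R_subset_closure (G : ∀ i, Good (h i))
    (hZ01 : ∀ z ∈ Z, ∀ i, z i = 0 ∨ z i = 1)
    (hZ1 : ∀ i : Fin d, ∃ z ∈ Z, z i = 1) :
    Rset I Z h ⊆ closure (convexHull ℝ (Sset I Z h)) := by
  classical
  rintro ⟨τ, x, z⟩ ⟨hx, hz, hsum⟩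
  rcases Set.eq_empty_or_nonempty Z with rfl | hZne
  · rw [convexHull_empty] at hz; exact absurd hz (Set.notMem_empty _)
  obtain ⟨z0, hz0⟩ := hZne
  choose ζf hζf hζf1 using hZ1
  set c : ℝ := ((d : ℝ) + 1)⁻¹ with hc_def
  have hc0 : 0 < c := by positivity
  set pts : Option (Fin d) → (Fin d → ℝ) := fun k => k.elim z0 ζf with hpts_def
  have hptsZ : ∀ k, pts k ∈ Z := by
    intro k
    cases k with
    | none => exact hz0
    | some j => exact hζf j
  have hpts01 : ∀ k i, 0 ≤ pts k i ∧ pts k i ≤ 1 := by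
    intro k i
    rcases hZ01 (pts k) (hptsZ k) i with h0 | h1
    · rw [h0]; norm_num
    · rw [h1]; norm_num
  set wbar : Fin d → ℝ := ∑ k : Option (Fin d), c • pts k with hwbar_def
  have hwbar_apply : ∀ i, wbar i = ∑ k : Option (Fin d), c * pts k i := by
    intro i
    rw [hwbar_def, Finset.sum_apply]
    exact Finset.sum_congr rfl (fun k _ => by simp [smul_eq_mul])
  have hwsum : ∑ _k : Option (Fin d), c = 1 := by
    rw [Finset.sum_const, nsmul_eq_mul, hc_def]
    simp [Fintype.card_option]
    field_simp
  have hwbar_mem : wbar ∈ convexHull ℝ Z := by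
    have := Finset.centerMass_mem_convexHull (Finset.univ : Finset (Option (Fin d)))
      (w := fun _ => c) (fun _ _ => hc0.le) (by rw [hwsum]; exact one_pos)
      (z := pts) (fun k _ => hptsZ k)
    rwa [Finset.centerMass_eq_of_sum_1 _ _ hwsum] at this
  have hwbar_pos : ∀ i, 0 < wbar i := by
    intro i
    rw [hwbar_apply i]
    have hterm : ∀ k ∈ (Finset.univ : Finset (Option (Fin d))), 0 ≤ c * pts k i :=
      fun k _ => mul_nonneg hc0.le (hpts01 k i).1
    have hle : c * pts (some i) i ≤ ∑ k : Option (Fin d), c * pts k i :=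
      Finset.single_le_sum hterm (Finset.mem_univ _)
    have : pts (some i) i = 1 := hζf1 i
    rw [this, mul_one] at hle
    exact lt_of_lt_of_le hc0 hle
  -- box facts for z
  have hbox := convexHull_box hZ01 hz
  -- real values of the perspective terms
  have hb : ∀ i ∈ (Finset.univ : Finset (Fin d)),
      perspCl (h i) (x i) (z i) ≠ ⊥ := fun i _ => perspCl_ne_bot (G i)
  set a : Fin d → ℝ := fun i => (perspCl (h i) (x i) (z i)).toReal with ha_def
  have ha : ∀ i, perspCl (h i) (x i) (z i) = ((a i : ℝ) : EReal) :=
    fun i => terms_real hb hsum i (Finset.mem_univ i)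
  have hsa : ∑ i, a i ≤ τ := sum_toReal_le hb hsum
  set rr : Fin d → ℝ := fun i => if 0 < z i then (h i (x i / z i)).toReal else 0 with hrr_def
  -- for positive z i, the h-value is real and a i = z i * rr i
  have hposfacts : ∀ i, 0 < z i →
      h i (x i / z i) = ((rr i : ℝ) : EReal) ∧ a i = z i * rr i := by
    intro i hzi
    have hne_top : h i (x i / z i) ≠ ⊤ := by
      intro he
      have h5 := ha i
      rw [perspCl_pos hzi, he, EReal.coe_mul_top_of_pos hzi] at h5
      exact absurd h5.symm (EReal.coe_ne_top _)
    have hval : h i (x i / z i) = (((h i (x i / z i)).toReal : ℝ) : EReal) :=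
      (EReal.coe_toReal hne_top ((G i).hbot _)).symm
    have hrri : rr i = (h i (x i / z i)).toReal := if_pos hzi
    refine ⟨by rw [hrri]; exact hval, ?_⟩
    have h5 := ha i
    rw [perspCl_pos hzi, hval, ← EReal.coe_mul, ← hrri] at h5
    exact (EReal.coe_eq_coe_iff.1 h5).symm
  set cc : Fin d → ℝ := fun i => |wbar i - z i| * |rr i| with hcc_def
  have hcc0 : ∀ i, 0 ≤ cc i := fun i => mul_nonneg (abs_nonneg _) (abs_nonneg _)
  set C : ℝ := ∑ i, cc i with hC_def
  have hC0 : 0 ≤ C := Finset.sum_nonneg (fun i _ => hcc0 i)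
  -- the approximating sequence
  set ε : ℕ → ℝ := fun n => 1 / ((n : ℝ) + 1) with hε_def
  have hε0 : ∀ n, 0 < ε n := fun n => by positivity
  have hε1 : ∀ n, ε n ≤ 1 := by
    intro n
    rw [hε_def]
    rw [div_le_one (by positivity)]
    simp
  set zn : ℕ → Fin d → ℝ := fun n i => (1 - ε n) * z i + ε n * wbar i with hzn_def
  have hzn_pos : ∀ n i, 0 < zn n i := by
    intro n i
    have h1 : 0 ≤ (1 - ε n) * z i := mul_nonneg (by linarith [hε1 n]) (hbox i).1
    have h2 : 0 < ε n * wbar i := mul_pos (hε0 n) (hwbar_pos i)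
    simp only [hzn_def]
    linarith
  have hzn_mem : ∀ n, zn n ∈ convexHull ℝ Z := by
    intro n
    have := (convex_convexHull ℝ Z) hz hwbar_mem (by linarith [hε1 n] : 0 ≤ 1 - ε n)
      (hε0 n).le (by ring)
    have he : (1 - ε n) • z + ε n • wbar = zn n := by
      funext i
      simp [hzn_def, smul_eq_mul]
    rwa [he] at this
  set xn : ℕ → Fin d → ℝ := fun n i => if 0 < z i then x i * (zn n i / z i) else x i
    with hxn_def
  set τn : ℕ → ℝ := fun n => τ + ε n * C with hτn_def
  -- each approximate point is in the convex hull
  have hmem : ∀ n, (τn n, xn n, zn n) ∈ convexHull ℝ (Sset I Z h) := by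
    intro n
    apply core_mem G hZ01 (hzn_mem n) (hzn_pos n)
    · intro i hi
      show (0:ℝ) ≤ (if 0 < z i then x i * (zn n i / z i) else x i)
      split
      · next hzi => exact mul_nonneg (hx i hi) (div_nonneg (hzn_pos n i).le hzi.le)
      · exact hx i hi
    · -- the sum bound
      have hterm : ∀ i ∈ (Finset.univ : Finset (Fin d)),
          (zn n i : EReal) * h i (xn n i / zn n i)
            ≤ (((a i + ε n * cc i) : ℝ) : EReal) := by
        intro i _
        by_cases hzi : 0 < z i
        · obtain ⟨hval, hai⟩ := hposfacts i hzi
          have hxq : xn n i / zn n i = x i / z i := by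
            have h1 : xn n i = x i * (zn n i / z i) := if_pos hzi
            rw [h1, mul_div_assoc, div_div, mul_comm (z i) (zn n i), ← div_div,
              div_self (hzn_pos n i).ne', mul_one_div]
          rw [hxq, hval, ← EReal.coe_mul, EReal.coe_le_coe_iff]
          have h2 : zn n i * rr i = z i * rr i + ε n * ((wbar i - z i) * rr i) := by
            simp only [hzn_def]; ring
          have h3 : (wbar i - z i) * rr i ≤ cc i := by
            rw [hcc_def]
            calc (wbar i - z i) * rr i ≤ |(wbar i - z i) * rr i| := le_abs_self _
              _ = |wbar i - z i| * |rr i| := abs_mul _ _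
          have h4 := mul_le_mul_of_nonneg_left h3 (hε0 n).le
          rw [h2, hai]
          linarith
        · have hzi0 : z i = 0 := le_antisymm (not_lt.1 hzi) (hbox i).1
          have hxq : xn n i = x i := if_neg hzi
          rw [hxq]
          have h1 : (zn n i : EReal) * h i (x i / zn n i) ≤ perspCl (h i) (x i) 0 :=
            le_perspCl_zero (G i) (hzn_pos n i)
          have h2 : perspCl (h i) (x i) 0 = ((a i : ℝ) : EReal) := by
            rw [← hzi0]; exact ha i
          refine h1.trans (h2.le.trans ?_)
          rw [EReal.coe_le_coe_iff]
          have := mul_nonneg (hε0 n).le (hcc0 i)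
          linarith
      calc (∑ i, (zn n i : EReal) * h i (xn n i / zn n i))
          ≤ ∑ i, (((a i + ε n * cc i) : ℝ) : EReal) := Finset.sum_le_sum hterm
        _ = ((∑ i, (a i + ε n * cc i) : ℝ) : EReal) := (coe_sum _ _).symm
        _ ≤ ((τn n : ℝ) : EReal) := by
            rw [EReal.coe_le_coe_iff, Finset.sum_add_distrib, ← Finset.mul_sum]
            simp only [hτn_def, ← hC_def]
            linarith
  -- convergence
  have hεlim : Tendsto ε atTop (nhds 0) := by
    rw [hε_def]
    exact tendsto_one_div_add_atTop_nhds_zero_nat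
  have hτlim : Tendsto τn atTop (nhds τ) := by
    have h1 : Tendsto (fun n => τ + ε n * C) atTop (nhds (τ + 0 * C)) :=
      tendsto_const_nhds.add (hεlim.mul_const C)
    simpa using h1
  have hznlim : ∀ i, Tendsto (fun n => zn n i) atTop (nhds (z i)) := by
    intro i
    have h1 : Tendsto (fun n => (1 - ε n) * z i + ε n * wbar i) atTop
        (nhds ((1 - 0) * z i + 0 * wbar i)) :=
      (((tendsto_const_nhds.sub hεlim).mul_const (z i)).add (hεlim.mul_const (wbar i)))
    simpa using h1
  have hxnlim : ∀ i, Tendsto (fun n => xn n i) atTop (nhds (x i)) := by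
    intro i
    by_cases hzi : 0 < z i
    · have h1 : Tendsto (fun n => x i * (zn n i / z i)) atTop
          (nhds (x i * (z i / z i))) :=
        ((hznlim i).div_const (z i)).const_mul (x i)
      rw [div_self hzi.ne', mul_one] at h1
      have he : (fun n => xn n i) = fun n => x i * (zn n i / z i) := by
        funext n; exact if_pos hzi
      rwa [he]
    · have he : (fun n => xn n i) = fun _ => x i := by
        funext n; exact if_neg hzi
      rw [he]
      exact tendsto_const_nhds
  have hlim : Tendsto (fun n => ((τn n, xn n, zn n) : ℝ × (Fin d → ℝ) × (Fin d → ℝ)))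
      atTop (nhds (τ, x, z)) :=
    hτlim.prodMk_nhds ((tendsto_pi_nhds.2 hxnlim).prodMk_nhds (tendsto_pi_nhds.2 hznlim))
  exact mem_closure_of_tendsto hlim (Filter.Eventually.of_forall hmem)

end SepAux2

/-- Closed convex hull of the separable set `H` (Theorem on separable functions):
`cl conv(H) = {(τ, x, z) ∈ ℝ × X × conv(Z) : Σ_i h_i^π(x_i, z_i) ≤ τ}`. -/
theorem closure_convexHull_separable {d : ℕ} (I : Set (Fin d))
    (Z : Set (Fin d → ℝ)) (hZ01 : ∀ z ∈ Z, ∀ i, z i = 0 ∨ z i = 1)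
    (hZ1 : ∀ i : Fin d, ∃ z ∈ Z, z i = 1)
    (h : Fin d → ℝ → EReal)
    (hbot : ∀ i, ∀ x : ℝ, h i x ≠ ⊥) (hnetop : ∀ i, ∃ x : ℝ, h i x ≠ ⊤)
    (hlsc : ∀ i, LowerSemicontinuous (h i))
    (hconv : ∀ i, Convex ℝ {u : ℝ × ℝ | h i u.2 ≤ (u.1 : EReal)})
    (h0 : ∀ i, h i 0 = 0) :
    closure (convexHull ℝ
      {p : ℝ × (Fin d → ℝ) × (Fin d → ℝ) |
        (∀ i ∈ I, 0 ≤ p.2.1 i) ∧ p.2.2 ∈ Z ∧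
        (∑ i, h i (p.2.1 i)) ≤ (p.1 : EReal) ∧
        ∀ i, p.2.1 i * (1 - p.2.2 i) = 0})
      = {p : ℝ × (Fin d → ℝ) × (Fin d → ℝ) |
        (∀ i ∈ I, 0 ≤ p.2.1 i) ∧ p.2.2 ∈ convexHull ℝ Z ∧
        (∑ i, perspCl (h i) (p.2.1 i) (p.2.2 i)) ≤ (p.1 : EReal)} := by
  have G : ∀ i, SepAux.Good (h i) := fun i => ⟨hbot i, hlsc i, hconv i, h0 i⟩
  show closure (convexHull ℝ (SepAux2.Sset I Z h)) = SepAux2.Rset I Z h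
  apply Set.Subset.antisymm
  · exact closure_minimal
      (convexHull_min (SepAux2.S_subset_R G hZ01) (SepAux2.R_convex G hZ01))
      (SepAux2.R_closed G hZ01)
  · exact SepAux2.R_subset_closure G hZ01 hZ1
end

section
/- Let T = {(τ, x, z) ∈ ℝ × ℝ^d × Z : h(aᵀx) ≤ τ and x_i(1 − z_i) = 0 for all i ∈ [d]}, where Z ⊆ {0,1}^d with Z ≠ {0}, the graph G_Z is connected, a ∈ ℝ^d has a_i ≠ 0 for all i, and h : ℝ → ℝ ∪ {+∞} is proper, lower semicontinuous, convex with h(0) = 0. Then the closed convex hull of T equals {(τ, x, z) ∈ ℝ × ℝ^d × ℝ^d : there exists w ∈ ℝ such that h^π(aᵀx, w) ≤ τ and (w, z) ∈ conv(Δ₁)}, where Δ₁ = {(w, z) ∈ {0,1} × Z : w ≤ Σ_{i∈[d]} z_i}. -/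
open scoped Classical

/-- The graph `G_Z` on `[d]` associated with `Z ⊆ {0,1}^d`. -/
def graphOfZ {d : ℕ} (Z : Set (Fin d → ℝ)) : SimpleGraph (Fin d) :=
  SimpleGraph.fromRel (fun i j => ∃ z ∈ Z, z i = 1 ∧ z j = 1)

open Set Filter Topology

namespace RankOne

lemma ereal_le_of_forall_lt {x y : EReal} (h : ∀ z : ℝ, (z:EReal) < x → (z:EReal) ≤ y) :
    x ≤ y := by
  by_contra hcon
  push_neg at hcon
  obtain ⟨z, hz1, hz2⟩ := EReal.exists_between_coe_real hcon
  exact absurd (h z hz2) (not_le.2 hz1)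

/-- The set of affine minorants of `h`. -/
def Dset (h : ℝ → EReal) : Set (ℝ × ℝ) :=
  {pc | ∀ y : ℝ, ((pc.1 * y + pc.2 : ℝ) : EReal) ≤ h y}

lemma epi_closed (h : ℝ → EReal) (hlsc : LowerSemicontinuous h) :
    IsClosed {u : ℝ × ℝ | h u.2 ≤ (u.1 : EReal)} := by
  rw [← isSeqClosed_iff_isClosed]
  intro u p hu hup
  by_contra hcon
  simp only [Set.mem_setOf_eq, not_le] at hcon
  obtain ⟨b, hb1, hb2⟩ := EReal.exists_between_coe_real hcon
  have h2 : Tendsto (fun n => (u n).2) atTop (𝓝 p.2) := (continuous_snd.tendsto p).comp hup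
  have h1 : Tendsto (fun n => (u n).1) atTop (𝓝 p.1) := (continuous_fst.tendsto p).comp hup
  have hev2 : ∀ᶠ n in atTop, b ≤ (u n).1 := by
    filter_upwards [h2.eventually (hlsc p.2 b hb2)] with n hn
    have := hn.trans_le (hu n)
    exact_mod_cast this.le
  have : b ≤ p.1 := ge_of_tendsto h1 hev2
  exact absurd hb1 (not_lt.2 (by exact_mod_cast this))

lemma funrepr (f : ℝ × ℝ →L[ℝ] ℝ) (v : ℝ × ℝ) :
    f v = f (1, 0) * v.1 + f (0, 1) * v.2 := by
  have hv : v = v.1 • ((1:ℝ), (0:ℝ)) + v.2 • ((0:ℝ), (1:ℝ)) := by simp [Prod.ext_iff]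
  rw [hv, map_add, map_smul, map_smul, smul_eq_mul, smul_eq_mul]
  simp
  ring

/-- From a separating functional with negative `τ`-coefficient, build a minorant. -/
lemma minorant_of_sep (h : ℝ → EReal) (hbot : ∀ x : ℝ, h x ≠ ⊥)
    (α β u : ℝ) (hαneg : α < 0)
    (hyp : ∀ T y₀ : ℝ, h y₀ ≤ (T : EReal) → α * T + β * y₀ < u) :
    (-β/α, u/α) ∈ Dset h := by
  intro y₀
  rcases eq_top_or_lt_top (h y₀) with htop | hlt'
  · rw [htop]; exact le_top
  · set T := (h y₀).toReal with hT
    have hy0real : h y₀ = (T : EReal) := (EReal.coe_toReal hlt'.ne (hbot y₀)).symm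
    have hball := hyp T y₀ (le_of_eq hy0real)
    have key : -β/α * y₀ + u/α ≤ T := by
      have h1 : (u - β * y₀)/α ≤ T := by
        rw [div_le_iff_of_neg hαneg]; nlinarith
      have h2 : -β/α * y₀ + u/α = (u - β * y₀)/α := by ring
      linarith [h2 ▸ h1]
    rw [hy0real]
    exact_mod_cast key

lemma exists_minorant_of_lt (h : ℝ → EReal)
    (hbot : ∀ x : ℝ, h x ≠ ⊥) (hnetop : ∃ x : ℝ, h x ≠ ⊤)
    (hlsc : LowerSemicontinuous h)
    (hconv : Convex ℝ {u : ℝ × ℝ | h u.2 ≤ (u.1 : EReal)})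
    (y t : ℝ) (hty : (t : EReal) < h y) :
    ∃ pc ∈ Dset h, t < pc.1 * y + pc.2 := by
  classical
  set epi : Set (ℝ × ℝ) := {u : ℝ × ℝ | h u.2 ≤ (u.1 : EReal)} with hepi
  have hclosed : IsClosed epi := epi_closed h hlsc
  -- separation at a point below the epigraph
  have getsep : ∀ (y' t' : ℝ), (t' : EReal) < h y' →
      ∃ α β u : ℝ, α ≤ 0 ∧ (∀ T y₀ : ℝ, h y₀ ≤ (T : EReal) → α * T + β * y₀ < u) ∧
        u < α * t' + β * y' := by
    intro y' t' hlt
    have hnot : (t', y') ∉ epi := by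
      simp only [hepi, Set.mem_setOf_eq]; exact not_le.2 hlt
    obtain ⟨f, u, hfu, huf⟩ := geometric_hahn_banach_closed_point hconv hclosed hnot
    refine ⟨f (1,0), f (0,1), u, ?_, ?_, ?_⟩
    · -- α ≤ 0 using a point of the epigraph pushed upward
      obtain ⟨y₁, hy₁⟩ := hnetop
      set H := (h y₁).toReal with hH
      have hmem : ∀ s : ℝ, 0 ≤ s → (H + s, y₁) ∈ epi := by
        intro s hs
        have h0 : h y₁ ≤ ((H : ℝ) : EReal) := le_of_eq (EReal.coe_toReal hy₁ (hbot y₁)).symm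
        exact h0.trans (by exact_mod_cast (by linarith : H ≤ H + s))
      by_contra hcon
      push_neg at hcon
      have h1 : ∀ s : ℝ, 0 ≤ s → f (1,0) * (H + s) + f (0,1) * y₁ < u := by
        intro s hs
        have := hfu _ (hmem s hs)
        rwa [funrepr] at this
      set s₀ : ℝ := max 0 ((u - f (1,0) * H - f (0,1) * y₁) / f (1,0)) with hs₀
      have hs := h1 s₀ (le_max_left _ _)
      have h3 : f (1,0) * ((u - f (1,0) * H - f (0,1) * y₁) / f (1,0)) ≤ f (1,0) * s₀ :=
        mul_le_mul_of_nonneg_left (le_max_right _ _) hcon.le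
      rw [mul_div_cancel₀ _ (ne_of_gt hcon)] at h3
      nlinarith
    · intro T y₀ hTy
      have hmem : (T, y₀) ∈ epi := hTy
      have := hfu _ hmem
      rwa [funrepr] at this
    · have := huf
      rwa [funrepr] at this
  -- base minorant
  obtain ⟨y₁, hy₁⟩ := hnetop
  have hy1lt : (((h y₁).toReal - 1 : ℝ) : EReal) < h y₁ := by
    have : h y₁ = (((h y₁).toReal : ℝ) : EReal) := (EReal.coe_toReal hy₁ (hbot y₁)).symm
    rw [this]
    exact_mod_cast (by linarith : (h y₁).toReal - 1 < (h y₁).toReal)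
  obtain ⟨α₁, β₁, u₁, hα₁, hyp₁, hsep₁⟩ := getsep y₁ ((h y₁).toReal - 1) hy1lt
  have hα₁neg : α₁ < 0 := by
    rcases lt_or_eq_of_le hα₁ with hneg | heq
    · exact hneg
    · exfalso
      have h2 := hyp₁ (h y₁).toReal y₁ (le_of_eq (EReal.coe_toReal hy₁ (hbot y₁)).symm)
      rw [← heq.symm] at h2 hsep₁
      simp only [zero_mul, zero_add] at h2 hsep₁
      linarith
  obtain ⟨pc₀, hpc₀⟩ : (Dset h).Nonempty := ⟨_, minorant_of_sep h hbot α₁ β₁ u₁ hα₁neg hyp₁⟩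
  -- main separation at (t, y)
  obtain ⟨α, β, u, hαle, hyp, hsep⟩ := getsep y t hty
  rcases lt_or_eq_of_le hαle with hαneg | hαzero
  · refine ⟨(-β/α, u/α), minorant_of_sep h hbot α β u hαneg hyp, ?_⟩
    have h1 : t < (u - β * y)/α := by
      rw [lt_div_iff_of_neg hαneg]; nlinarith
    have h2 : -β/α * y + u/α = (u - β * y)/α := by ring
    simp only []
    linarith [h2 ▸ h1]
  · -- vertical separation: β * y₀ < u on dom, u < β * y
    have hdom : ∀ y₀ : ℝ, h y₀ ≠ ⊤ → β * y₀ < u := by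
      intro y₀ hne
      have := hyp (h y₀).toReal y₀ (le_of_eq (EReal.coe_toReal hne (hbot y₀)).symm)
      rw [hαzero] at this
      simpa using this
    have hyout : u < β * y := by
      rw [hαzero] at hsep
      simpa using hsep
    set δ : ℝ := β * y - u with hδ
    have hδpos : 0 < δ := by simp only [hδ]; linarith
    set lam : ℝ := max 0 ((t - (pc₀.1 * y + pc₀.2) + 1) / δ) with hlam
    have hlamnn : 0 ≤ lam := le_max_left _ _
    refine ⟨(pc₀.1 + lam * β, pc₀.2 - lam * u), ?_, ?_⟩
    · intro y₀
      rcases eq_top_or_lt_top (h y₀) with htop' | hlt'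
      · rw [htop']; exact le_top
      · have hne : h y₀ ≠ ⊤ := hlt'.ne
        have h1 := hpc₀ y₀
        have h2 := hdom y₀ hne
        have hy0real : h y₀ = (((h y₀).toReal : ℝ) : EReal) := (EReal.coe_toReal hne (hbot y₀)).symm
        rw [hy0real] at h1 ⊢
        have h1' : pc₀.1 * y₀ + pc₀.2 ≤ (h y₀).toReal := by exact_mod_cast h1
        have : (pc₀.1 + lam * β) * y₀ + (pc₀.2 - lam * u) ≤ (h y₀).toReal := by nlinarith
        exact_mod_cast this
    · have hkey : lam * δ ≥ t - (pc₀.1 * y + pc₀.2) + 1 := by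
        rcases le_or_gt ((t - (pc₀.1 * y + pc₀.2) + 1) / δ) 0 with hle | hpos
        · have hl0 : lam = 0 := max_eq_left hle
          rw [hl0]
          have := (div_nonpos_iff.mp hle)
          rcases this with ⟨h1, h2⟩ | ⟨h1, h2⟩
          · linarith
          · linarith
        · have hl : lam = (t - (pc₀.1 * y + pc₀.2) + 1) / δ := max_eq_right hpos.le
          rw [hl, div_mul_cancel₀ _ (ne_of_gt hδpos)]
      simp only [hδ] at hkey
      have hgoal : t < (pc₀.1 + lam * β) * y + (pc₀.2 - lam * u) := by nlinarith
      simpa using hgoal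

/-- The sup-of-linear-functions formula for the closed perspective. -/
noncomputable def Pfun (h : ℝ → EReal) (x w : ℝ) : EReal :=
  ⨆ pc ∈ Dset h, ((pc.1 * x + pc.2 * w : ℝ) : EReal)

section P
variable {h : ℝ → EReal}

lemma c_nonpos (h0 : h 0 = 0) {pc : ℝ × ℝ} (hpc : pc ∈ Dset h) : pc.2 ≤ 0 := by
  have := hpc 0
  rw [h0] at this
  simp at this
  exact_mod_cast this

lemma Pfun_le_iff {x w : ℝ} {τ : EReal} :
    Pfun h x w ≤ τ ↔ ∀ pc ∈ Dset h, ((pc.1 * x + pc.2 * w : ℝ) : EReal) ≤ τ := by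
  rw [Pfun, iSup₂_le_iff]

lemma hreal_of_le {r : ℝ} {τ : ℝ} (hbot : ∀ x : ℝ, h x ≠ ⊥) (hle : h r ≤ (τ:EReal)) :
    h r = ((h r).toReal : EReal) ∧ (h r).toReal ≤ τ := by
  have hne : h r ≠ ⊤ := fun htop => by rw [htop] at hle; exact absurd hle (by simp)
  constructor
  · exact (EReal.coe_toReal hne (hbot r)).symm
  · have h2 := hle
    rw [(EReal.coe_toReal hne (hbot r)).symm] at h2
    exact_mod_cast h2

lemma Pfun_le_mul_pos (hbot : ∀ x : ℝ, h x ≠ ⊥) {x w : ℝ} (hw : 0 < w) :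
    Pfun h x w ≤ (w : EReal) * h (x / w) := by
  rw [Pfun_le_iff]
  intro pc hpc
  have hm := hpc (x / w)
  rcases eq_top_or_lt_top (h (x/w)) with htop | hfin
  · rw [htop, EReal.coe_mul_top_of_pos hw]; exact le_top
  · have h1 : h (x/w) = ((h (x/w)).toReal : EReal) := (EReal.coe_toReal hfin.ne (hbot _)).symm
    rw [h1] at hm ⊢
    rw [← EReal.coe_mul]
    have hm' : pc.1 * (x/w) + pc.2 ≤ (h (x/w)).toReal := by exact_mod_cast hm
    have : pc.1 * x + pc.2 * w ≤ w * (h (x/w)).toReal := by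
      have h3 := mul_le_mul_of_nonneg_left hm' hw.le
      calc pc.1 * x + pc.2 * w = w * (pc.1 * (x/w) + pc.2) := by field_simp; try ring
      _ ≤ w * (h (x/w)).toReal := h3
    exact_mod_cast this

lemma mul_pos_le_Pfun
    (hFM : ∀ (y t : ℝ), (t : EReal) < h y → ∃ pc ∈ Dset h, t < pc.1 * y + pc.2)
    (hbot : ∀ x : ℝ, h x ≠ ⊥) {x w : ℝ} (hw : 0 < w) :
    (w : EReal) * h (x / w) ≤ Pfun h x w := by
  refine ereal_le_of_forall_lt (fun z hz => ?_)
  have hzw : ((z / w : ℝ) : EReal) < h (x / w) := by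
    rcases eq_top_or_lt_top (h (x/w)) with htop | hfin
    · rw [htop]; exact EReal.coe_lt_top _
    · have h1 : h (x/w) = ((h (x/w)).toReal : EReal) := (EReal.coe_toReal hfin.ne (hbot _)).symm
      rw [h1] at hz ⊢
      rw [← EReal.coe_mul] at hz
      have : z < w * (h (x/w)).toReal := by exact_mod_cast hz
      have : z / w < (h (x/w)).toReal := by
        rw [div_lt_iff₀ hw]; linarith [this]
      exact_mod_cast this
  obtain ⟨pc, hpc, hlt⟩ := hFM (x/w) (z/w) hzw
  have : z < pc.1 * x + pc.2 * w := by
    have h2 := (mul_lt_mul_iff_right₀ hw).2 hlt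
    calc z = w * (z / w) := by field_simp
    _ < w * (pc.1 * (x/w) + pc.2) := h2
    _ = pc.1 * x + pc.2 * w := by field_simp; try ring
  calc (z : EReal) ≤ ((pc.1 * x + pc.2 * w : ℝ) : EReal) := by exact_mod_cast this.le
  _ ≤ Pfun h x w := le_iSup₂_of_le pc hpc le_rfl

lemma Pfun_eq_mul_pos
    (hFM : ∀ (y t : ℝ), (t : EReal) < h y → ∃ pc ∈ Dset h, t < pc.1 * y + pc.2)
    (hbot : ∀ x : ℝ, h x ≠ ⊥) {x w : ℝ} (hw : 0 < w) :
    (w : EReal) * h (x / w) = Pfun h x w :=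
  le_antisymm (mul_pos_le_Pfun hFM hbot hw) (Pfun_le_mul_pos hbot hw)

/-- The perspective is antitone in `s` on `(0, ∞)`. -/
lemma persp_antitone (hbot : ∀ x : ℝ, h x ≠ ⊥) (h0 : h 0 = 0)
    (hconv : Convex ℝ {u : ℝ × ℝ | h u.2 ≤ (u.1 : EReal)}) (x : ℝ) :
    AntitoneOn (fun s : ℝ => (s : EReal) * h (x / s)) (Ioi 0) := by
  intro s hs t ht hst
  simp only
  rcases eq_top_or_lt_top (h (x/s)) with htop | hfin
  · rw [htop, EReal.coe_mul_top_of_pos hs]; exact le_top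
  · have hs' : (0:ℝ) < s := hs
    have ht' : (0:ℝ) < t := ht
    set H := (h (x/s)).toReal with hH
    have h1 : h (x/s) = (H : EReal) := (EReal.coe_toReal hfin.ne (hbot _)).symm
    -- convexity: (s/t) • (H, x/s) + (1 - s/t) • (0,0) ∈ epi
    have hmem1 : (H, x/s) ∈ {u : ℝ × ℝ | h u.2 ≤ (u.1 : EReal)} := le_of_eq h1
    have hmem0 : ((0:ℝ), (0:ℝ)) ∈ {u : ℝ × ℝ | h u.2 ≤ (u.1 : EReal)} := by
      simp only [Set.mem_setOf_eq, h0]; exact le_refl _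
    have hθ1 : 0 ≤ s / t := by positivity
    have hθ2 : 0 ≤ 1 - s / t := by
      have : s / t ≤ 1 := by rw [div_le_one ht']; exact hst
      linarith
    have hcomb := hconv hmem1 hmem0 hθ1 hθ2 (by ring)
    simp only [Prod.smul_mk, smul_eq_mul, Prod.mk_add_mk, mul_zero, add_zero,
      Set.mem_setOf_eq] at hcomb
    have hxts : (s/t) * (x/s) = x / t := by field_simp
    rw [hxts] at hcomb
    -- hcomb : h (x/t) ≤ (s/t * H : ℝ)
    obtain ⟨h2, h3⟩ := hreal_of_le hbot hcomb
    rw [h1, h2, ← EReal.coe_mul, ← EReal.coe_mul, EReal.coe_le_coe_iff]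
    calc t * (h (x/t)).toReal ≤ t * (s/t * H) := by
          exact mul_le_mul_of_nonneg_left h3 ht'.le
    _ = s * H := by field_simp
end P

section P2
variable {h : ℝ → EReal}
lemma perspCl_zero_eq (hbot : ∀ x : ℝ, h x ≠ ⊥) (h0 : h 0 = 0)
    (hconv : Convex ℝ {u : ℝ × ℝ | h u.2 ≤ (u.1 : EReal)}) (x : ℝ) :
    perspCl h x 0 = sSup ((fun s : ℝ => (s : EReal) * h (x / s)) '' Ioi 0) := by
  have ht := (persp_antitone hbot h0 hconv x).tendsto_nhdsGT
    (OrderTop.bddAbove _)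
  rw [perspCl]
  simp only [lt_irrefl, if_false, if_pos rfl]
  exact ht.limUnder_eq

lemma mul_le_perspCl_zero (hbot : ∀ x : ℝ, h x ≠ ⊥) (h0 : h 0 = 0)
    (hconv : Convex ℝ {u : ℝ × ℝ | h u.2 ≤ (u.1 : EReal)}) {x s : ℝ} (hs : 0 < s) :
    (s : EReal) * h (x / s) ≤ perspCl h x 0 := by
  rw [perspCl_zero_eq hbot h0 hconv]
  exact le_sSup (Set.mem_image_of_mem _ hs)

lemma perspCl_eq_Pfun
    (hFM : ∀ (y t : ℝ), (t : EReal) < h y → ∃ pc ∈ Dset h, t < pc.1 * y + pc.2)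
    (hbot : ∀ x : ℝ, h x ≠ ⊥) (h0 : h 0 = 0)
    (hconv : Convex ℝ {u : ℝ × ℝ | h u.2 ≤ (u.1 : EReal)})
    {x w : ℝ} (hw : 0 ≤ w) :
    perspCl h x w = Pfun h x w := by
  rcases lt_or_eq_of_le hw with hpos | hzero
  · rw [perspCl, if_pos hpos]
    exact Pfun_eq_mul_pos hFM hbot hpos
  · rw [← hzero, perspCl_zero_eq hbot h0 hconv]
    apply le_antisymm
    · apply sSup_le
      rintro v ⟨s, hs, rfl⟩
      simp only
      rw [Pfun_eq_mul_pos hFM hbot hs]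
      refine iSup₂_le (fun pc hpc => ?_)
      refine le_trans ?_ (le_iSup₂_of_le pc hpc le_rfl)
      have : pc.1 * x + pc.2 * s ≤ pc.1 * x + pc.2 * 0 := by
        have hc := c_nonpos h0 hpc
        nlinarith [(Set.mem_Ioi.mp hs).le]
      exact_mod_cast this
    · rw [Pfun_le_iff]
      intro pc hpc
      rw [mul_zero, add_zero]
      refine ereal_le_of_forall_lt (fun z hz => ?_)
      have hz' : z < pc.1 * x := by exact_mod_cast hz
      set s : ℝ := if pc.2 = 0 then 1 else (z - pc.1 * x) / (2 * pc.2) with hsdef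
      have hspos : 0 < s := by
        rw [hsdef]
        split_ifs with hc
        · norm_num
        · have hcneg : pc.2 < 0 := lt_of_le_of_ne (c_nonpos h0 hpc) hc
          apply div_pos_of_neg_of_neg
          · linarith
          · linarith
      have hzlt : z ≤ pc.1 * x + pc.2 * s := by
        rw [hsdef]
        split_ifs with hc
        · rw [hc]; linarith
        · have hcneg : pc.2 < 0 := lt_of_le_of_ne (c_nonpos h0 hpc) hc
          have : pc.2 * ((z - pc.1 * x) / (2 * pc.2)) = (z - pc.1 * x)/2 := by
            field_simp
          rw [this]
          linarith
      calc (z : EReal) ≤ ((pc.1 * x + pc.2 * s : ℝ) : EReal) := by exact_mod_cast hzlt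
      _ ≤ Pfun h x s := le_iSup₂_of_le pc hpc le_rfl
      _ = (s : EReal) * h (x/s) := (Pfun_eq_mul_pos hFM hbot hspos).symm
      _ ≤ sSup ((fun s : ℝ => (s : EReal) * h (x / s)) '' Ioi 0) :=
        le_sSup (Set.mem_image_of_mem _ hspos)
end P2

section Sset
variable {d : ℕ} (Z : Set (Fin d → ℝ)) (a : Fin d → ℝ) (h : ℝ → EReal)

def Delta1 : Set (ℝ × (Fin d → ℝ)) :=
  {q : ℝ × (Fin d → ℝ) | (q.1 = 0 ∨ q.1 = 1) ∧ q.2 ∈ Z ∧ q.1 ≤ ∑ i, q.2 i}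

def Sset : Set (ℝ × (Fin d → ℝ) × (Fin d → ℝ)) :=
  {p | ∃ w : ℝ, Pfun h (∑ i, a i * p.2.1 i) w ≤ (p.1 : EReal) ∧
      (w, p.2.2) ∈ convexHull ℝ (Delta1 Z)}

lemma Z_finite (hZ01 : ∀ z ∈ Z, ∀ i, z i = 0 ∨ z i = 1) : Z.Finite := by
  have h1 : (Set.pi (univ : Set (Fin d)) (fun _ => ({0,1} : Set ℝ))).Finite :=
    Set.Finite.pi (fun _ => (Set.finite_singleton (1:ℝ)).insert 0)
  refine h1.subset (fun z hz => ?_)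
  intro i _
  rcases hZ01 z hz i with h | h
  · simp [h]
  · simp [h]

lemma Delta1_finite (hZ01 : ∀ z ∈ Z, ∀ i, z i = 0 ∨ z i = 1) : (Delta1 Z).Finite := by
  have hsub : Delta1 Z ⊆ ({0,1} : Set ℝ) ×ˢ Z := by
    rintro ⟨w, z⟩ ⟨hw, hz, -⟩
    exact ⟨by simpa using hw, hz⟩
  exact ((( (Set.finite_singleton (1:ℝ)).insert 0).prod (Z_finite Z hZ01))).subset hsub

lemma w_mem_Icc (hZ01 : ∀ z ∈ Z, ∀ i, z i = 0 ∨ z i = 1) {w : ℝ} {z : Fin d → ℝ}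
    (hmem : (w, z) ∈ convexHull ℝ (Delta1 Z)) : w ∈ Icc (0:ℝ) 1 := by
  have hsub : convexHull ℝ (Delta1 Z) ⊆ (Prod.fst) ⁻¹' (Icc (0:ℝ) 1) := by
    apply convexHull_min
    · rintro ⟨w', z'⟩ ⟨hw', -, -⟩
      have hh' : w' = 0 ∨ w' = 1 := hw'
      rcases hh' with hh | hh <;>
        · subst hh
          refine ⟨by norm_num, by norm_num⟩
    · exact (convex_Icc (0:ℝ) 1).linear_preimage (LinearMap.fst ℝ ℝ (Fin d → ℝ))
  exact hsub hmem

lemma sum_linear (s t : ℝ) (x y : Fin d → ℝ) :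
    (∑ i, a i * (s • x + t • y) i) = s * (∑ i, a i * x i) + t * (∑ i, a i * y i) := by
  rw [Finset.mul_sum, Finset.mul_sum, ← Finset.sum_add_distrib]
  refine Finset.sum_congr rfl (fun i _ => ?_)
  simp only [Pi.add_apply, Pi.smul_apply, smul_eq_mul]
  ring

lemma Sset_convex : Convex ℝ (Sset Z a h) := by
  rintro p hp q hq s t hs ht hst
  obtain ⟨w₁, hP1, hc1⟩ := hp
  obtain ⟨w₂, hP2, hc2⟩ := hq
  refine ⟨s * w₁ + t * w₂, ?_, ?_⟩
  · rw [Pfun_le_iff]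
    intro pc hpc
    have h1 : ((pc.1 * (∑ i, a i * p.2.1 i) + pc.2 * w₁ : ℝ) : EReal) ≤ (p.1 : EReal) :=
      Pfun_le_iff.1 hP1 pc hpc
    have h2 : ((pc.1 * (∑ i, a i * q.2.1 i) + pc.2 * w₂ : ℝ) : EReal) ≤ (q.1 : EReal) :=
      Pfun_le_iff.1 hP2 pc hpc
    have h1' : pc.1 * (∑ i, a i * p.2.1 i) + pc.2 * w₁ ≤ p.1 := by exact_mod_cast h1
    have h2' : pc.1 * (∑ i, a i * q.2.1 i) + pc.2 * w₂ ≤ q.1 := by exact_mod_cast h2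
    have hcoord : (s • p + t • q).2.1 = s • p.2.1 + t • q.2.1 := rfl
    have hfst : (s • p + t • q).1 = s * p.1 + t * q.1 := rfl
    rw [hcoord, hfst, sum_linear]
    have : pc.1 * (s * (∑ i, a i * p.2.1 i) + t * (∑ i, a i * q.2.1 i))
        + pc.2 * (s * w₁ + t * w₂) ≤ s * p.1 + t * q.1 := by nlinarith
    exact_mod_cast this
  · have hmem := (convex_convexHull ℝ (Delta1 Z)) hc1 hc2 hs ht hst
    have : (s • ((w₁ : ℝ), p.2.2) + t • ((w₂ : ℝ), q.2.2)) =
        ((s * w₁ + t * w₂ : ℝ), (s • p + t • q).2.2) := rfl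
    rwa [this] at hmem

lemma Sset_closed (hZ01 : ∀ z ∈ Z, ∀ i, z i = 0 ∨ z i = 1) : IsClosed (Sset Z a h) := by
  rw [← isSeqClosed_iff_isClosed]
  intro u p hu hup
  choose w hPw hcw using hu
  have hwIcc : ∀ n, w n ∈ Icc (0:ℝ) 1 := fun n => w_mem_Icc Z hZ01 (hcw n)
  obtain ⟨wl, hwl, φ, hφ, hwtend⟩ := isCompact_Icc.tendsto_subseq hwIcc
  have hsub : Tendsto (u ∘ φ) atTop (𝓝 p) := hup.comp hφ.tendsto_atTop
  have hztend : Tendsto (fun n => (u (φ n)).2.2) atTop (𝓝 p.2.2) :=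
    ((continuous_snd.comp continuous_snd).tendsto p).comp hsub
  have httend : Tendsto (fun n => (u (φ n)).1) atTop (𝓝 p.1) :=
    (continuous_fst.tendsto p).comp hsub
  have hRcont : Continuous (fun q : ℝ × (Fin d → ℝ) × (Fin d → ℝ) => ∑ i, a i * q.2.1 i) := by
    apply continuous_finset_sum
    intro i _
    exact continuous_const.mul ((continuous_apply i).comp (continuous_fst.comp continuous_snd))
  have hRtend : Tendsto (fun n => ∑ i, a i * (u (φ n)).2.1 i) atTop (𝓝 (∑ i, a i * p.2.1 i)) :=
    (hRcont.tendsto p).comp hsub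
  refine ⟨wl, ?_, ?_⟩
  · rw [Pfun_le_iff]
    intro pc hpc
    have hseq : ∀ n, pc.1 * (∑ i, a i * (u (φ n)).2.1 i) + pc.2 * w (φ n) ≤ (u (φ n)).1 := by
      intro n
      have := Pfun_le_iff.1 (hPw (φ n)) pc hpc
      exact_mod_cast this
    have hlim : Tendsto (fun n => pc.1 * (∑ i, a i * (u (φ n)).2.1 i) + pc.2 * w (φ n))
        atTop (𝓝 (pc.1 * (∑ i, a i * p.2.1 i) + pc.2 * wl)) :=
      ((hRtend.const_mul pc.1).add (hwtend.const_mul pc.2))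
    have := le_of_tendsto_of_tendsto' hlim httend hseq
    exact_mod_cast this
  · have hclosed : IsClosed (convexHull ℝ (Delta1 Z)) :=
      ((Delta1_finite Z hZ01).isCompact_convexHull ℝ).isClosed
    refine hclosed.mem_of_tendsto (hwtend.prodMk_nhds hztend) (Eventually.of_forall ?_)
    intro n
    exact hcw (φ n)
end Sset

section Geo
variable {d : ℕ} (Z : Set (Fin d → ℝ)) (a : Fin d → ℝ) (h : ℝ → EReal)

abbrev Espace (d : ℕ) := ℝ × (Fin d → ℝ) × (Fin d → ℝ)

def Tset : Set (Espace d) :=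
  {p : Espace d | p.2.2 ∈ Z ∧ h (∑ i, a i * p.2.1 i) ≤ (p.1 : EReal) ∧
    ∀ i, p.2.1 i * (1 - p.2.2 i) = 0}

def adot (x : Fin d → ℝ) : ℝ := ∑ i, a i * x i

lemma adot_smul (c : ℝ) (x : Fin d → ℝ) : adot a (c • x) = c * adot a x := by
  rw [adot, adot, Finset.mul_sum]
  exact Finset.sum_congr rfl (fun i _ => by simp [mul_comm, mul_assoc, mul_left_comm])

lemma adot_add (x y : Fin d → ℝ) : adot a (x + y) = adot a x + adot a y := by
  rw [adot, adot, adot, ← Finset.sum_add_distrib]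
  exact Finset.sum_congr rfl (fun i _ => by simp [mul_add])

lemma adot_sub (x y : Fin d → ℝ) : adot a (x - y) = adot a x - adot a y := by
  rw [adot, adot, adot, ← Finset.sum_sub_distrib]
  exact Finset.sum_congr rfl (fun i _ => by simp [mul_sub])

noncomputable def uvec (i : Fin d) : Fin d → ℝ := Pi.single i ((a i)⁻¹)

lemma adot_uvec (ha : ∀ i, a i ≠ 0) (i : Fin d) : adot a (uvec a i) = 1 := by
  rw [adot, Finset.sum_eq_single i]
  · rw [uvec, Pi.single_eq_same, mul_inv_cancel₀ (ha i)]
  · intro j _ hji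
    rw [uvec, Pi.single_eq_of_ne hji, mul_zero]
  · intro hi
    exact absurd (Finset.mem_univ i) hi

lemma absorb {T : Set (Espace d)} (v q₀ : Espace d)
    (hq : ∀ s : ℝ, 1 ≤ s → q₀ + s • v ∈ convexHull ℝ T) :
    ∀ p ∈ closure (convexHull ℝ T), p + v ∈ closure (convexHull ℝ T) := by
  intro p hp
  set C := closure (convexHull ℝ T) with hC
  have hCconv : Convex ℝ C := (convex_convexHull ℝ T).closure
  have hCclosed : IsClosed C := isClosed_closure
  set f : ℕ → Espace d := fun n => p + v + (1/((n:ℝ)+1)) • (q₀ - p) with hf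
  have hfC : ∀ n, f n ∈ C := by
    intro n
    have hn : (0:ℝ) < (n:ℝ) + 1 := by positivity
    set μ : ℝ := 1/((n:ℝ)+1) with hμ
    have hμpos : 0 < μ := by positivity
    have hqn : q₀ + ((n:ℝ)+1) • v ∈ convexHull ℝ T :=
      hq _ (by linarith [Nat.cast_nonneg (α := ℝ) n])
    have hμle : μ ≤ 1 := by
      rw [hμ, div_le_one hn]
      linarith [Nat.cast_nonneg (α := ℝ) n]
    have hcomb := hCconv hp (subset_closure hqn)
      (by linarith : (0:ℝ) ≤ 1 - μ) hμpos.le (by ring)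
    have hμs : μ * ((n:ℝ)+1) = 1 := by rw [hμ]; field_simp
    have hiden : (1 - μ) • p + μ • (q₀ + ((n:ℝ)+1) • v) = f n := by
      rw [hf]
      simp only [smul_add, smul_smul, hμs, sub_smul, one_smul, smul_sub]
      abel
    rwa [hiden] at hcomb
  have htend : Tendsto f atTop (𝓝 (p + v)) := by
    have h2 : Tendsto (fun n : ℕ => (1/((n:ℝ)+1)) • (q₀ - p)) atTop (𝓝 ((0:ℝ) • (q₀ - p))) :=
      tendsto_one_div_add_atTop_nhds_zero_nat.smul_const _
    rw [zero_smul] at h2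
    have := (tendsto_const_nhds (x := p + v) (f := atTop (α := ℕ))).add h2
    rwa [add_zero] at this
  exact hCclosed.mem_of_tendsto htend (Eventually.of_forall hfC)

lemma edge_absorb (ha : ∀ i, a i ≠ 0) (h0 : h 0 = 0)
    {i j : Fin d} (hadj : (graphOfZ Z).Adj i j) (c : ℝ) :
    ∀ p ∈ closure (convexHull ℝ (Tset Z a h)),
      p + ((0:ℝ), c • (uvec a i - uvec a j), (0 : Fin d → ℝ)) ∈
        closure (convexHull ℝ (Tset Z a h)) := by
  obtain ⟨hne, hz⟩ : i ≠ j ∧ ((∃ z ∈ Z, z i = 1 ∧ z j = 1) ∨ (∃ z ∈ Z, z j = 1 ∧ z i = 1)) := by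
    have h1 := hadj
    rw [graphOfZ, SimpleGraph.fromRel_adj] at h1
    exact h1
  obtain ⟨z, hzZ, hzi, hzj⟩ : ∃ z ∈ Z, z i = 1 ∧ z j = 1 := by
    rcases hz with ⟨z, h1, h2, h3⟩ | ⟨z, h1, h2, h3⟩
    · exact ⟨z, h1, h2, h3⟩
    · exact ⟨z, h1, h3, h2⟩
  apply absorb _ ((0:ℝ), (0 : Fin d → ℝ), z)
  intro s hs
  apply subset_convexHull
  have hform : ((0:ℝ), (0 : Fin d → ℝ), z) + s • ((0:ℝ), c • (uvec a i - uvec a j), (0 : Fin d → ℝ))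
      = ((0:ℝ), (s * c) • (uvec a i - uvec a j), z) := by
    simp [Prod.ext_iff, smul_smul]
  rw [hform]
  refine ⟨hzZ, ?_, ?_⟩
  · have hdot : (∑ k, a k * ((s * c) • (uvec a i - uvec a j)) k) = 0 := by
      have := adot_smul a (s*c) (uvec a i - uvec a j)
      rw [adot_sub, adot_uvec a ha, adot_uvec a ha] at this
      simpa [adot] using this
    simp only [hdot, h0]
    exact_mod_cast le_refl ((0:ℝ):EReal)
  · intro k
    by_cases hki : k = i
    · subst hki
      simp [hzi]
    · by_cases hkj : k = j
      · subst hkj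
        simp [hzj]
      · have h1 : uvec a i k = 0 := Pi.single_eq_of_ne hki _
        have h2 : uvec a j k = 0 := Pi.single_eq_of_ne hkj _
        simp [h1, h2]

/-- Directions in the hyperplane `aᵀ v = 0` are absorbed. -/
lemma span_absorb (ha : ∀ i, a i ≠ 0) (h0 : h 0 = 0) (hconn : (graphOfZ Z).Connected)
    (v : Fin d → ℝ) (hv : adot a v = 0) :
    ∀ p ∈ closure (convexHull ℝ (Tset Z a h)),
      p + ((0:ℝ), v, (0 : Fin d → ℝ)) ∈ closure (convexHull ℝ (Tset Z a h)) := by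
  set M : Set (Fin d → ℝ) := {v | ∀ p ∈ closure (convexHull ℝ (Tset Z a h)),
    p + ((0:ℝ), v, (0 : Fin d → ℝ)) ∈ closure (convexHull ℝ (Tset Z a h))} with hM
  have hzero : (0 : Fin d → ℝ) ∈ M := by
    intro p hp
    have : p + ((0:ℝ), (0 : Fin d → ℝ), (0 : Fin d → ℝ)) = p := by
      simp [Prod.ext_iff]
    rwa [this]
  have hadd : ∀ v₁ ∈ M, ∀ v₂ ∈ M, v₁ + v₂ ∈ M := by
    intro v₁ h₁ v₂ h₂ p hp
    have h3 := h₂ _ (h₁ p hp)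
    have : p + ((0:ℝ), v₁, (0 : Fin d → ℝ)) + ((0:ℝ), v₂, (0 : Fin d → ℝ))
        = p + ((0:ℝ), v₁ + v₂, (0 : Fin d → ℝ)) := by
      simp [Prod.ext_iff, add_assoc]
    rwa [this] at h3
  have hedge : ∀ {i j : Fin d}, (graphOfZ Z).Adj i j → ∀ c : ℝ, c • (uvec a i - uvec a j) ∈ M :=
    fun hadj c => edge_absorb Z a h ha h0 hadj c
  have hwalk : ∀ i j : Fin d, (graphOfZ Z).Walk i j → ∀ c : ℝ, c • (uvec a i - uvec a j) ∈ M := by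
    intro i j w
    induction w with
    | nil =>
      intro c
      simpa using hzero
    | cons hadj w ih =>
      intro c
      rename_i i' j' k'
      have h1 : c • (uvec a i' - uvec a j') ∈ M := hedge hadj c
      have h2 : c • (uvec a j' - uvec a k') ∈ M := ih c
      have := hadd _ h1 _ h2
      rwa [← smul_add, sub_add_sub_cancel] at this
  -- decompose v
  have hdne : Nonempty (Fin d) := hconn.nonempty
  obtain ⟨i₀⟩ := hdne
  have hdecomp : v = ∑ i, (a i * v i) • (uvec a i - uvec a i₀) := by
    funext k
    rw [Finset.sum_apply]
    have : ∀ i, ((a i * v i) • (uvec a i - uvec a i₀)) k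
        = (a i * v i) * (uvec a i k) - (a i * v i) * (uvec a i₀ k) := by
      intro i
      simp [mul_sub]
    rw [Finset.sum_congr rfl (fun i _ => this i), Finset.sum_sub_distrib]
    have h1 : (∑ i, (a i * v i) * (uvec a i k)) = v k := by
      rw [Finset.sum_eq_single k]
      · rw [uvec, Pi.single_eq_same]
        field_simp [ha k]
      · intro j _ hjk
        rw [uvec, Pi.single_eq_of_ne (Ne.symm hjk), mul_zero]
      · intro hk
        exact absurd (Finset.mem_univ k) hk
    have h2 : (∑ i, (a i * v i) * (uvec a i₀ k)) = 0 := by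
      rw [← Finset.sum_mul]
      have : (∑ i, a i * v i) = 0 := hv
      rw [this, zero_mul]
    rw [h1, h2, sub_zero]
  have hsum : (∑ i, (a i * v i) • (uvec a i - uvec a i₀)) ∈ M := by
    classical
    apply Finset.sum_induction _ (· ∈ M) (fun x y hx hy => hadd x hx y hy) hzero
    intro i _
    exact hwalk i i₀ (hconn.preconnected i i₀).some _
  rw [hdecomp]
  exact hsum

/-- Ray absorption at `w = 0`. -/
lemma ray_absorb (ha : ∀ i, a i ≠ 0)
    {zs : Fin d → ℝ} (hzs : zs ∈ Z) {is : Fin d} (hzs1 : zs is = 1)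
    (r τh : ℝ) (hray : ∀ s : ℝ, 1 ≤ s → h (s * r) ≤ ((s * τh : ℝ) : EReal)) :
    ∀ p ∈ closure (convexHull ℝ (Tset Z a h)),
      p + (τh, r • uvec a is, (0 : Fin d → ℝ)) ∈ closure (convexHull ℝ (Tset Z a h)) := by
  apply absorb _ ((0:ℝ), (0 : Fin d → ℝ), zs)
  intro s hs
  apply subset_convexHull
  have hform : ((0:ℝ), (0 : Fin d → ℝ), zs) + s • (τh, r • uvec a is, (0 : Fin d → ℝ))
      = (s * τh, (s * r) • uvec a is, zs) := by
    simp [Prod.ext_iff, smul_smul]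
  rw [hform]
  refine ⟨hzs, ?_, ?_⟩
  · have hdot : (∑ k, a k * ((s * r) • uvec a is) k) = s * r := by
      have := adot_smul a (s*r) (uvec a is)
      rw [adot_uvec a ha, mul_one] at this
      simpa [adot] using this
    rw [hdot]
    exact hray s hs
  · intro k
    by_cases hki : k = is
    · subst hki
      simp [hzs1]
    · have h1 : uvec a is k = 0 := Pi.single_eq_of_ne hki _
      simp [h1]
end Geo

section Geo2
variable {d : ℕ} (Z : Set (Fin d → ℝ)) (a : Fin d → ℝ) (h : ℝ → EReal)
lemma adot_finsum {ι : Type*} (t : Finset ι) (f : ι → (Fin d → ℝ)) :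
    adot a (∑ k ∈ t, f k) = ∑ k ∈ t, adot a (f k) := by
  classical
  induction t using Finset.induction with
  | empty => simp [adot]
  | insert _ _ hnotmem ih =>
    rw [Finset.sum_insert hnotmem, adot_add a, ih, Finset.sum_insert hnotmem]

/-- a nonzero element of `Z` has a coordinate equal to 1 -/
lemma exists_one (hZ01 : ∀ z ∈ Z, ∀ i, z i = 0 ∨ z i = 1) (hZne : Z ≠ {0})
    (hne : Z.Nonempty) : ∃ zs ∈ Z, ∃ is, zs is = 1 := by
  by_contra hcon
  push_neg at hcon
  apply hZne
  apply Set.eq_singleton_iff_nonempty_unique_mem.2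
  refine ⟨hne, ?_⟩
  intro z hz
  funext i
  rcases hZ01 z hz i with hh | hh
  · simpa using hh
  · exact absurd hh (hcon z hz i)

lemma Tset_sub_Sset (hZ01 : ∀ z ∈ Z, ∀ i, z i = 0 ∨ z i = 1) (h0 : h 0 = 0) :
    Tset Z a h ⊆ Sset Z a h := by
  rintro ⟨τ, x, z⟩ ⟨hzZ, hhx, hsupp⟩
  dsimp only at hzZ hhx hsupp
  by_cases hx0 : x = 0
  · refine ⟨0, ?_, ?_⟩
    · rw [Pfun_le_iff]
      intro pc hpc
      have hR : (∑ i, a i * x i) = 0 := by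
        rw [hx0]; simp
      rw [hR] at hhx
      rw [h0] at hhx
      have hτ : (0:ℝ) ≤ τ := by exact_mod_cast hhx
      have : pc.1 * (∑ i, a i * x i) + pc.2 * 0 = 0 := by rw [hR]; ring
      rw [this]
      exact_mod_cast hτ
    · apply subset_convexHull
      refine ⟨Or.inl rfl, hzZ, ?_⟩
      show (0:ℝ) ≤ ∑ j, z j
      apply Finset.sum_nonneg
      intro i _
      show (0:ℝ) ≤ z i
      rcases hZ01 z hzZ i with hh | hh <;> rw [hh] <;> norm_num
  · obtain ⟨i, hi⟩ := Function.ne_iff.1 hx0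
    have hzi : z i = 1 := by
      have := hsupp i
      rcases mul_eq_zero.1 this with hh | hh
      · exact absurd hh (by simpa using hi)
      · linarith [hh]
    refine ⟨1, ?_, ?_⟩
    · rw [Pfun_le_iff]
      intro pc hpc
      have := (hpc (∑ i, a i * x i)).trans hhx
      rw [mul_one]
      exact this
    · apply subset_convexHull
      refine ⟨Or.inr rfl, hzZ, ?_⟩
      show (1:ℝ) ≤ ∑ j, z j
      have h1 : z i ≤ ∑ j, z j := by
        apply Finset.single_le_sum (f := z)
        · intro j _
          rcases hZ01 z hzZ j with hh | hh <;> rw [hh] <;> norm_num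
        · exact Finset.mem_univ i
      rw [hzi] at h1
      exact h1

lemma Sset_sub_closure (hZ01 : ∀ z ∈ Z, ∀ i, z i = 0 ∨ z i = 1)
    (hZne : Z ≠ {0}) (hconn : (graphOfZ Z).Connected)
    (ha : ∀ i, a i ≠ 0)
    (hbot : ∀ x : ℝ, h x ≠ ⊥) (h0 : h 0 = 0)
    (hconv : Convex ℝ {u : ℝ × ℝ | h u.2 ≤ (u.1 : EReal)})
    (hFM : ∀ (y t : ℝ), (t : EReal) < h y → ∃ pc ∈ Dset h, t < pc.1 * y + pc.2) :
    Sset Z a h ⊆ closure (convexHull ℝ (Tset Z a h)) := by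
  have hdne : Nonempty (Fin d) := hconn.nonempty
  obtain ⟨i₀⟩ := hdne
  rintro ⟨τ, x, z⟩ ⟨w, hP, hcw⟩
  simp only at hP hcw
  set R : ℝ := ∑ i, a i * x i with hR
  have hRadot : R = adot a x := rfl
  obtain ⟨hw0, hw1⟩ := w_mem_Icc Z hZ01 hcw
  rw [convexHull_eq] at hcw
  obtain ⟨ι, t, wt, pts, hwt0, hwt1, hpts, hcm⟩ := hcw
  rw [Finset.centerMass_eq_of_sum_1 _ _ hwt1] at hcm
  have hw_eq : (∑ k ∈ t, wt k * (pts k).1) = w := by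
    have := congrArg Prod.fst hcm
    rw [Prod.fst_sum] at this
    simpa [Prod.smul_fst, smul_eq_mul] using this
  have hz_eq : (∑ k ∈ t, wt k • (pts k).2) = z := by
    have := congrArg Prod.snd hcm
    rw [Prod.snd_sum] at this
    simpa [Prod.smul_snd] using this
  have hpts01 : ∀ k ∈ t, (pts k).1 = 0 ∨ (pts k).1 = 1 := fun k hk => (hpts k hk).1
  have hptsZ : ∀ k ∈ t, (pts k).2 ∈ Z := fun k hk => (hpts k hk).2.1
  have hptsle : ∀ k ∈ t, (pts k).1 ≤ ∑ i, (pts k).2 i := fun k hk => (hpts k hk).2.2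
  -- choice of support indices
  set ik : ι → Fin d := fun k => if hk : ∃ i, (pts k).2 i = 1 then hk.choose else i₀ with hik_def
  have hik : ∀ k ∈ t, (pts k).1 = 1 → (pts k).2 (ik k) = 1 := by
    intro k hk h1
    have hex : ∃ i, (pts k).2 i = 1 := by
      by_contra hno
      push_neg at hno
      have : (∑ i, (pts k).2 i) = 0 := by
        apply Finset.sum_eq_zero
        intro i _
        rcases hZ01 _ (hptsZ k hk) i with hh | hh
        · exact hh
        · exact absurd hh (hno i)
      have hle := hptsle k hk
      rw [h1, this] at hle
      linarith
    simp only [hik_def, dif_pos hex]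
    exact hex.choose_spec
  have htne : t.Nonempty := Finset.nonempty_of_sum_ne_zero (by rw [hwt1]; norm_num)
  rcases lt_or_eq_of_le hw0 with hwpos | hwzero
  · -- w > 0
    have hPm : (w : EReal) * h (R / w) ≤ (τ : EReal) := by
      rw [Pfun_eq_mul_pos hFM hbot hwpos]
      exact hP
    have hhtop : h (R / w) ≠ ⊤ := by
      intro htop
      rw [htop, EReal.coe_mul_top_of_pos hwpos] at hPm
      exact absurd hPm (by simp)
    set hr : ℝ := (h (R/w)).toReal with hhr_def
    have hhr : h (R/w) = (hr : EReal) := (EReal.coe_toReal hhtop (hbot _)).symm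
    have hwhr : w * hr ≤ τ := by
      rw [hhr, ← EReal.coe_mul] at hPm
      exact_mod_cast hPm
    set tsl : ℝ := τ - w * hr with htsl_def
    have htsl : 0 ≤ tsl := by simp only [htsl_def]; linarith
    set rq : ℝ := R / w with hrq_def
    set pt : ι → Espace d :=
      fun k => (tsl + hr * (pts k).1, ((pts k).1 * rq) • uvec a (ik k), (pts k).2) with hpt_def
    have hptT : ∀ k ∈ t, pt k ∈ Tset Z a h := by
      intro k hk
      rcases hpts01 k hk with hh | hh
      · refine ⟨hptsZ k hk, ?_, ?_⟩
        · have hx0 : ((pts k).1 * rq) • uvec a (ik k) = 0 := by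
            rw [hh, zero_mul, zero_smul]
          simp only [hpt_def, hx0]
          have : (∑ i, a i * (0 : Fin d → ℝ) i) = 0 := by simp
          rw [this, h0, hh, mul_zero, add_zero]
          exact_mod_cast htsl
        · intro i
          simp only [hpt_def, hh, zero_mul, zero_smul]
          simp
      · refine ⟨hptsZ k hk, ?_, ?_⟩
        · have hadotx : (∑ i, a i * (((pts k).1 * rq) • uvec a (ik k)) i) = (pts k).1 * rq := by
            have h1 := adot_smul a ((pts k).1 * rq) (uvec a (ik k))
            rw [adot_uvec a ha, mul_one] at h1
            exact h1
          simp only [hpt_def]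
          rw [hadotx, hh, one_mul, hhr]
          exact_mod_cast (by linarith : hr ≤ tsl + hr * 1)
        · intro i
          by_cases hii : i = ik k
          · subst hii
            simp only [hpt_def]
            rw [hik k hk hh]
            simp
          · simp only [hpt_def]
            have : uvec a (ik k) i = 0 := Pi.single_eq_of_ne hii _
            simp [this]
    have hp₀ : (∑ k ∈ t, wt k • pt k) ∈ convexHull ℝ (Tset Z a h) :=
      Convex.sum_mem (convex_convexHull ℝ _) hwt0 hwt1
        (fun k hk => subset_convexHull ℝ _ (hptT k hk))
    set p₀ : Espace d := ∑ k ∈ t, wt k • pt k with hp₀_def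
    have hfst : p₀.1 = τ := by
      rw [hp₀_def, Prod.fst_sum]
      have : ∀ k ∈ t, (wt k • pt k).1 = wt k * tsl + hr * (wt k * (pts k).1) := by
        intro k hk
        simp only [hpt_def, Prod.smul_fst, smul_eq_mul]
        ring
      rw [Finset.sum_congr rfl this, Finset.sum_add_distrib, ← Finset.sum_mul, ← Finset.mul_sum,
        hwt1, hw_eq, one_mul]
      simp only [htsl_def]
      ring
    have hzcomp : p₀.2.2 = z := by
      rw [hp₀_def, Prod.snd_sum, Prod.snd_sum]
      simp only [Prod.smul_snd, hpt_def]
      exact hz_eq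
    have hxdot : adot a p₀.2.1 = R := by
      have hxform : p₀.2.1 = ∑ k ∈ t, (wt k * ((pts k).1 * rq)) • uvec a (ik k) := by
        rw [hp₀_def, Prod.snd_sum, Prod.fst_sum]
        refine Finset.sum_congr rfl (fun k hk => ?_)
        simp only [hpt_def, Prod.smul_snd, Prod.smul_fst, smul_smul]
      rw [hxform, adot_finsum a]
      have h2 : ∀ k ∈ t, adot a ((wt k * ((pts k).1 * rq)) • uvec a (ik k))
          = wt k * (pts k).1 * rq := by
        intro k hk
        rw [adot_smul a, adot_uvec a ha, mul_one]
        ring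
      rw [Finset.sum_congr rfl h2, ← Finset.sum_mul, hw_eq, hrq_def]
      field_simp
    have hfinal := span_absorb Z a h ha h0 hconn (x - p₀.2.1)
      (by rw [adot_sub, hxdot, hRadot]; ring) p₀ (subset_closure hp₀)
    have : p₀ + ((0:ℝ), x - p₀.2.1, (0:Fin d → ℝ)) = (τ, x, z) := by
      have h1 : p₀ = (p₀.1, p₀.2.1, p₀.2.2) := rfl
      rw [Prod.ext_iff, Prod.ext_iff]
      refine ⟨?_, ?_, ?_⟩
      · simp [hfst]
      · simp
      · simp [hzcomp]
    rwa [this] at hfinal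
  · -- w = 0
    set pt : ι → Espace d := fun k => ((0:ℝ), (0:Fin d → ℝ), (pts k).2) with hpt_def
    have hptT : ∀ k ∈ t, pt k ∈ Tset Z a h := by
      intro k hk
      refine ⟨hptsZ k hk, ?_, ?_⟩
      · simp only [hpt_def]
        have : (∑ i, a i * (0 : Fin d → ℝ) i) = 0 := by simp
        rw [this, h0]
        exact le_refl _
      · intro i
        simp [hpt_def]
    have hp₁ : (∑ k ∈ t, wt k • pt k) ∈ convexHull ℝ (Tset Z a h) :=
      Convex.sum_mem (convex_convexHull ℝ _) hwt0 hwt1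
        (fun k hk => subset_convexHull ℝ _ (hptT k hk))
    set p₁ : Espace d := ∑ k ∈ t, wt k • pt k with hp₁_def
    have hp₁eq : p₁ = ((0:ℝ), (0:Fin d → ℝ), z) := by
      rw [Prod.ext_iff, Prod.ext_iff]
      refine ⟨?_, ?_, ?_⟩
      · rw [hp₁_def, Prod.fst_sum]
        apply Finset.sum_eq_zero
        intro k hk
        simp [hpt_def]
      · show p₁.2.1 = 0
        rw [hp₁_def, Prod.snd_sum, Prod.fst_sum]
        apply Finset.sum_eq_zero
        intro k hk
        simp [hpt_def]
      · show p₁.2.2 = z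
        rw [hp₁_def, Prod.snd_sum, Prod.snd_sum]
        simp only [Prod.smul_snd, hpt_def]
        exact hz_eq
    obtain ⟨zs, hzs, is, his⟩ := exists_one Z hZ01 hZne ⟨(pts htne.choose).2, hptsZ _ htne.choose_spec⟩
    have hray : ∀ s : ℝ, 1 ≤ s → h (s * R) ≤ ((s * τ : ℝ) : EReal) := by
      intro s hs
      have hspos : (0:ℝ) < s := by linarith
      have hinv : (0:ℝ) < 1/s := by positivity
      have h1 := mul_le_perspCl_zero hbot h0 hconv (x := R) hinv
      rw [perspCl_eq_Pfun hFM hbot h0 hconv le_rfl] at h1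
      rw [← hwzero] at hP
      have h2 : ((1/s : ℝ) : EReal) * h (R / (1/s)) ≤ (τ : EReal) := h1.trans hP
      have hdiv : R / (1/s) = s * R := by field_simp
      rw [hdiv] at h2
      rcases eq_top_or_lt_top (h (s * R)) with htop | hfin
      · rw [htop, EReal.coe_mul_top_of_pos hinv] at h2
        exact absurd h2 (by simp)
      · have h3 : h (s*R) = (((h (s*R)).toReal : ℝ) : EReal) := (EReal.coe_toReal hfin.ne (hbot _)).symm
        rw [h3, ← EReal.coe_mul] at h2
        have h4 : (1/s) * (h (s*R)).toReal ≤ τ := by exact_mod_cast h2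
        rw [h3]
        have : (h (s*R)).toReal ≤ s * τ := by
          rw [div_mul_eq_mul_div, div_le_iff₀ hspos] at h4
          linarith [h4]
        exact_mod_cast this
    have hp₂ := ray_absorb Z a h ha hzs his R τ hray p₁ (subset_closure hp₁)
    have hfinal := span_absorb Z a h ha h0 hconn (x - R • uvec a is)
      (by rw [adot_sub, adot_smul, adot_uvec a ha, hRadot]; ring) _ hp₂
    have heq : p₁ + (τ, R • uvec a is, (0:Fin d → ℝ)) + ((0:ℝ), x - R • uvec a is, (0:Fin d → ℝ))
        = (τ, x, z) := by
      rw [hp₁eq]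
      rw [Prod.ext_iff, Prod.ext_iff]
      refine ⟨by simp, by simp, by simp⟩
    rwa [heq] at hfinal
end Geo2

end RankOne

/-- Extended perspective formulation of `cl conv(T)` for a rank-one function, with
`X = ℝ^d` and connected `G_Z`:
`cl conv(T) = {(τ, x, z) : ∃ w, h^π(aᵀx, w) ≤ τ, (w, z) ∈ conv(Δ₁)}` where
`Δ₁ = {(w, z) ∈ {0,1} × Z : w ≤ 1ᵀz}`. -/
theorem clconv_T_connected {d : ℕ}
    (Z : Set (Fin d → ℝ)) (hZ01 : ∀ z ∈ Z, ∀ i, z i = 0 ∨ z i = 1)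
    (hZne : Z ≠ {0}) (hconn : (graphOfZ Z).Connected)
    (a : Fin d → ℝ) (ha : ∀ i, a i ≠ 0)
    (h : ℝ → EReal)
    (hbot : ∀ x : ℝ, h x ≠ ⊥) (hnetop : ∃ x : ℝ, h x ≠ ⊤)
    (hlsc : LowerSemicontinuous h)
    (hconv : Convex ℝ {u : ℝ × ℝ | h u.2 ≤ (u.1 : EReal)})
    (h0 : h 0 = 0) :
    closure (convexHull ℝ
      {p : ℝ × (Fin d → ℝ) × (Fin d → ℝ) |
        p.2.2 ∈ Z ∧ h (∑ i, a i * p.2.1 i) ≤ (p.1 : EReal) ∧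
        ∀ i, p.2.1 i * (1 - p.2.2 i) = 0})
      = {p : ℝ × (Fin d → ℝ) × (Fin d → ℝ) | ∃ w : ℝ,
          perspCl h (∑ i, a i * p.2.1 i) w ≤ (p.1 : EReal) ∧
          (w, p.2.2) ∈ convexHull ℝ
            {q : ℝ × (Fin d → ℝ) |
              (q.1 = 0 ∨ q.1 = 1) ∧ q.2 ∈ Z ∧ q.1 ≤ ∑ i, q.2 i}} := by
  have hFM : ∀ (y t : ℝ), (t : EReal) < h y → ∃ pc ∈ RankOne.Dset h, t < pc.1 * y + pc.2 :=
    fun y t hty => RankOne.exists_minorant_of_lt h hbot hnetop hlsc hconv y t hty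
  have key1 : closure (convexHull ℝ (RankOne.Tset Z a h)) = RankOne.Sset Z a h := by
    apply Set.Subset.antisymm
    · apply closure_minimal
      · exact convexHull_min (RankOne.Tset_sub_Sset Z a h hZ01 h0) (RankOne.Sset_convex Z a h)
      · exact RankOne.Sset_closed Z a h hZ01
    · exact RankOne.Sset_sub_closure Z a h hZ01 hZne hconn ha hbot h0 hconv hFM
  have key2 : RankOne.Sset Z a h = {p : ℝ × (Fin d → ℝ) × (Fin d → ℝ) | ∃ w : ℝ,
          perspCl h (∑ i, a i * p.2.1 i) w ≤ (p.1 : EReal) ∧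
          (w, p.2.2) ∈ convexHull ℝ
            {q : ℝ × (Fin d → ℝ) |
              (q.1 = 0 ∨ q.1 = 1) ∧ q.2 ∈ Z ∧ q.1 ≤ ∑ i, q.2 i}} := by
    ext p
    constructor
    · rintro ⟨w, hPf, hhull⟩
      have hw0 : 0 ≤ w := (RankOne.w_mem_Icc Z hZ01 hhull).1
      refine ⟨w, ?_, hhull⟩
      rw [RankOne.perspCl_eq_Pfun hFM hbot h0 hconv hw0]
      exact hPf
    · rintro ⟨w, hPf, hhull⟩
      have hw0 : 0 ≤ w := (RankOne.w_mem_Icc Z hZ01 hhull).1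
      refine ⟨w, ?_, hhull⟩
      rw [← RankOne.perspCl_eq_Pfun hFM hbot h0 hconv hw0]
      exact hPf
  rw [← key2, ← key1]
  rfl
end
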